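/- arXiv:2509.03023 — 2 statements merged into one kernel-verified Lean document; each statement's English description precedes it below -/
import Mathlib

section
/- Let (X,c_i,c_j) be a digital picture with {i,j} = {1,2}. If X is nonempty, c_i-connected, and has no hole, then (X,c_i) is i-contractible. -/
/-- Points of the digital plane. -/
abbrev Pt : Type := ℤ × ℤ

/-- `c_i`-adjacency on `ℤ²` (for `i = 1` or `i = 2`). -/
def cAdj (i : ℕ) (x y : Pt) : Prop :=
  if i = 1 then |x.1 - y.1| + |x.2 - y.2| ≤ 1
  else |x.1 - y.1| ≤ 1 ∧ |x.2 - y.2| ≤ 1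

/-- The adjacency induced on a subset of `ℤ²`. -/
def subAdj (i : ℕ) (X : Set Pt) (x y : X) : Prop := cAdj i x.1 y.1

/-- Digital continuity of a map between digital images. -/
def DigCont {α β : Type} (κ : α → α → Prop) (δ : β → β → Prop) (f : α → β) : Prop :=
  ∀ x y, κ x y → δ (f x) (f y)

/-- The standard (`c_1`) adjacency on `ℕ`, used for digital intervals. -/
def natAdj (s t : ℕ) : Prop := s = t ∨ s + 1 = t ∨ t + 1 = s

/-- The two normal product adjacencies on `α × ℕ`. -/
def prodAdj (i : ℕ) {α : Type} (κ : α → α → Prop) (p q : α × ℕ) : Prop :=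
  if i = 1 then (κ p.1 q.1 ∧ p.2 = q.2) ∨ (p.1 = q.1 ∧ natAdj p.2 q.2)
  else κ p.1 q.1 ∧ natAdj p.2 q.2

/-- `f` and `g` are `i`-homotopic: there is a continuous
`H : X ×_i [0,m]_ℤ → Y` with `H(·,0) = f` and `H(·,m) = g`. -/
def Homotopic (i : ℕ) {α β : Type} (κ : α → α → Prop) (δ : β → β → Prop)
    (f g : α → β) : Prop :=
  ∃ (m : ℕ) (H : α → ℕ → β),
    (∀ x, H x 0 = f x) ∧ (∀ x, H x m = g x) ∧
    (∀ x y s t, s ≤ m → t ≤ m → prodAdj i κ (x, s) (y, t) → δ (H x s) (H y t))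

/-- `i`-homotopy equivalence of digital images. -/
def HtpyEquiv (i : ℕ) {α β : Type} (κ : α → α → Prop) (δ : β → β → Prop) : Prop :=
  ∃ (f : α → β) (g : β → α),
    DigCont κ δ f ∧ DigCont δ κ g ∧
    Homotopic i κ κ (g ∘ f) id ∧ Homotopic i δ δ (f ∘ g) id

/-- Homotopy equivalence of digital pictures `(X, c_i, c_j)` and `(Y, c_i, c_j)`. -/
def PicHtpyEquiv (i j : ℕ) (X Y : Set Pt) : Prop :=
  HtpyEquiv i (subAdj i X) (subAdj i Y) ∧ HtpyEquiv j (subAdj j Xᶜ) (subAdj j Yᶜ)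

/-- Isomorphism of digital images: a continuous bijection with continuous inverse. -/
def DigIso {α β : Type} (κ : α → α → Prop) (δ : β → β → Prop) : Prop :=
  ∃ e : α ≃ β, DigCont κ δ ⇑e ∧ DigCont δ κ ⇑e.symm

/-- Isomorphism of digital pictures. -/
def PicIso (i j : ℕ) (X Y : Set Pt) : Prop :=
  DigIso (subAdj i X) (subAdj i Y) ∧ DigIso (subAdj j Xᶜ) (subAdj j Yᶜ)

/-- `x` and `y` are joined by a `c_i`-path inside `A`. -/
def ChainIn (i : ℕ) (A : Set Pt) (x y : Pt) : Prop :=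
  ∃ (n : ℕ) (c : ℕ → Pt), c 0 = x ∧ c n = y ∧ (∀ k ≤ n, c k ∈ A) ∧
    ∀ k < n, cAdj i (c k) (c (k + 1))

/-- `A` is `c_i`-connected. -/
def Conn (i : ℕ) (A : Set Pt) : Prop := ∀ x ∈ A, ∀ y ∈ A, ChainIn i A x y

/-- The `c_i`-component of `p` in `A`. -/
def compOf (i : ℕ) (A : Set Pt) (p : Pt) : Set Pt := {y | ChainIn i A p y}

/-- The digital picture `(X, c_i, c_j)` has no hole: every `c_j`-component
of the complement of `X` is infinite. -/
def NoHole (j : ℕ) (X : Set Pt) : Prop := ∀ p ∈ Xᶜ, (compOf j Xᶜ p).Infinite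

/-- The row of `X` at height `k`. -/
def rowOf (X : Set Pt) (k : ℤ) : Set Pt := X ∩ {p | p.2 = k}

/-- `r` is a row component of `(X, c_i)`: a `c_i`-component of a row of `X`. -/
def IsRowComp (i : ℕ) (X : Set Pt) (r : Set Pt) : Prop :=
  ∃ (k : ℤ) (p : Pt), p ∈ rowOf X k ∧ r = compOf i (rowOf X k) p

/-- Two subsets of `ℤ²` are `c_i`-adjacent. -/
def setAdj (i : ℕ) (A B : Set Pt) : Prop := ∃ a ∈ A, ∃ b ∈ B, cAdj i a b

/-- The edge relation of the row component graph `R(X, c_i)`: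
two distinct row components joined when they are `c_i`-adjacent. -/
def rcgAdj (i : ℕ) (X : Set Pt) (r s : Set Pt) : Prop :=
  IsRowComp i X r ∧ IsRowComp i X s ∧ r ≠ s ∧ setAdj i r s

/-- The row component graph `R(X, c_i)` is acyclic: there is no cycle of
`k ≥ 3` distinct row components with consecutive ones adjacent. -/
def RCGAcyclic (i : ℕ) (X : Set Pt) : Prop :=
  ¬ ∃ (k : ℕ) (r : ℕ → Set Pt), 3 ≤ k ∧
    (∀ t < k, IsRowComp i X (r t)) ∧
    (∀ t < k, ∀ t' < k, r t = r t' → t = t') ∧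
    (∀ t, t + 1 < k → rcgAdj i X (r t) (r (t + 1))) ∧
    rcgAdj i X (r (k - 1)) (r 0)

/-- The row component graph `R(X, c_i)` is connected. -/
def RCGConnected (i : ℕ) (X : Set Pt) : Prop :=
  ∀ r s : Set Pt, IsRowComp i X r → IsRowComp i X s →
    Relation.ReflTransGen (rcgAdj i X) r s

/-- A digital image is `i`-contractible: the identity is `i`-homotopic to a constant map. -/
def Contractible (i : ℕ) {α : Type} (κ : α → α → Prop) : Prop :=
  ∃ x₀ : α, Homotopic i κ κ id (fun _ => x₀)

/-- Row-convexity. -/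
def RowConvex (X : Set Pt) : Prop :=
  ∀ a b c k : ℤ, (a, k) ∈ X → (c, k) ∈ X → a ≤ b → b ≤ c → (b, k) ∈ X

/-- Column-convexity. -/
def ColConvex (X : Set Pt) : Prop :=
  ∀ a b c k : ℤ, (k, a) ∈ X → (k, c) ∈ X → a ≤ b → b ≤ c → (k, b) ∈ X

/-- The row-convex hull of `X`. -/
def Hr (X : Set Pt) : Set Pt := ⋂₀ {S | RowConvex S ∧ X ⊆ S}

/-- The column-convex hull of `X`. -/
def Hc (X : Set Pt) : Set Pt := ⋂₀ {S | ColConvex S ∧ X ⊆ S}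

/-- The rc-convex hull of `X`. -/
def Hrc (X : Set Pt) : Set Pt := ⋂₀ {S | (RowConvex S ∧ ColConvex S) ∧ X ⊆ S}

/-- A loop of length `m` inside `Z`: a continuous `γ : [0,m]_ℤ → Z` with `γ 0 = γ m`. -/
def LoopIn (j : ℕ) (Z : Set Pt) (m : ℕ) (γ : ℕ → Pt) : Prop :=
  γ 0 = γ m ∧ (∀ t ≤ m, γ t ∈ Z) ∧ ∀ t < m, cAdj j (γ t) (γ (t + 1))

/-- The loop `γ` is `j`-contractible in `Z`: there is a `j`-homotopy in `Z` from `γ`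
to the constant loop at `γ 0` whose every stage is a loop based at `γ 0`. -/
def LoopContractibleIn (j : ℕ) (Z : Set Pt) (m : ℕ) (γ : ℕ → Pt) : Prop :=
  ∃ (K : ℕ) (H : ℕ → ℕ → Pt),
    (∀ t, H t 0 = γ t) ∧ (∀ t, H t K = γ 0) ∧
    (∀ k ≤ K, H 0 k = γ 0 ∧ H m k = γ 0) ∧
    (∀ t ≤ m, ∀ k ≤ K, H t k ∈ Z) ∧
    (∀ s t k l, s ≤ m → t ≤ m → k ≤ K → l ≤ K →
      prodAdj j natAdj (s, k) (t, l) → cAdj j (H s k) (H t l))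

/-- The union of the infinite `c_j`-components of the complement of `X`. -/
def InfPart (j : ℕ) (X : Set Pt) : Set Pt := {p | p ∈ Xᶜ ∧ (compOf j Xᶜ p).Infinite}

/-- The outer perimeter of the digital picture `(X, c_i, c_j)`: the least length of a
non-`j`-contractible loop in the infinite component of the complement of `X`, or `1`
if no such loop exists.  (It depends only on `j` and `X`.) -/
noncomputable def outerPerim (j : ℕ) (X : Set Pt) : ℕ := by
  classical
  exact if (∃ m γ, LoopIn j (InfPart j X) m γ ∧ ¬ LoopContractibleIn j (InfPart j X) m γ)
    then sInf {m | ∃ γ, LoopIn j (InfPart j X) m γ ∧ ¬ LoopContractibleIn j (InfPart j X) m γ}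
    else 1

/-- The digital rectangle `I_{n,m} = [1,n]_ℤ × [1,m]_ℤ`. -/
def Irect (n m : ℤ) : Set Pt := Set.Icc 1 n ×ˢ Set.Icc 1 m

/-- A finite digital image is `i`-reducible when it is `i`-homotopy equivalent to a
digital image with strictly fewer points. -/
def Reducible (i : ℕ) {α : Type} (κ : α → α → Prop) : Prop :=
  ∃ (β : Type) (δ : β → β → Prop), Reflexive δ ∧ Symmetric δ ∧ Finite β ∧
    Nat.card β < Nat.card α ∧ HtpyEquiv i κ δ


-- §0 basic adjacency lemmas
lemma cAdj_of_le {i : ℕ} {x y : Pt} (h : |x.1 - y.1| + |x.2 - y.2| ≤ 1) : cAdj i x y := by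
  unfold cAdj; split
  · exact h
  · have h1 := abs_nonneg (x.1 - y.1); have h2 := abs_nonneg (x.2 - y.2)
    constructor <;> linarith

lemma cAdj_refl (i : ℕ) (x : Pt) : cAdj i x x := by
  apply cAdj_of_le; simp

lemma cAdj_symm {i : ℕ} {x y : Pt} (h : cAdj i x y) : cAdj i y x := by
  unfold cAdj at *; split at h <;> simp_all [abs_sub_comm]

lemma cAdj_dinf {i : ℕ} {x y : Pt} (h : cAdj i x y) :
    |x.1 - y.1| ≤ 1 ∧ |x.2 - y.2| ≤ 1 := by
  unfold cAdj at h; split at h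
  · have h1 := abs_nonneg (x.1 - y.1); have h2 := abs_nonneg (x.2 - y.2)
    constructor <;> linarith
  · exact h

lemma cAdj_one {x y : Pt} (h : cAdj 1 x y) : |x.1 - y.1| + |x.2 - y.2| ≤ 1 := by
  simpa [cAdj] using h

lemma cAdj_horiz {i : ℕ} {x y : Pt} (h : |x.1 - y.1| ≤ 1) (h2 : x.2 = y.2) : cAdj i x y := by
  apply cAdj_of_le; simp [h2]; linarith [abs_nonneg (x.1-y.1)]

lemma cAdj_vert {i : ℕ} {x y : Pt} (h : |x.2 - y.2| ≤ 1) (h2 : x.1 = y.1) : cAdj i x y := by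
  apply cAdj_of_le; simp [h2]; linarith [abs_nonneg (x.2-y.2)]

-- §1 chain lemmas
lemma ChainIn.mem_left {i : ℕ} {A : Set Pt} {x y : Pt} (h : ChainIn i A x y) : x ∈ A := by
  obtain ⟨n, c, h0, hn, hmem, _⟩ := h; have := hmem 0 (Nat.zero_le _); rwa [h0] at this

lemma ChainIn.mem_right {i : ℕ} {A : Set Pt} {x y : Pt} (h : ChainIn i A x y) : y ∈ A := by
  obtain ⟨n, c, h0, hn, hmem, _⟩ := h; have := hmem n le_rfl; rwa [hn] at this

lemma chainIn_refl {i : ℕ} {A : Set Pt} {x : Pt} (hx : x ∈ A) : ChainIn i A x x :=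
  ⟨0, fun _ => x, rfl, rfl, fun _ _ => hx, fun k hk => absurd hk (Nat.not_lt_zero k)⟩

lemma chainIn_step {i : ℕ} {A : Set Pt} {x y : Pt} (hx : x ∈ A) (hy : y ∈ A)
    (h : cAdj i x y) : ChainIn i A x y := by
  refine ⟨1, fun k => if k = 0 then x else y, by simp, by simp, ?_, ?_⟩
  · intro k _; dsimp only; split <;> assumption
  · intro k hk; interval_cases k; simpa using h

lemma ChainIn.trans {i : ℕ} {A : Set Pt} {x y z : Pt} (h1 : ChainIn i A x y)
    (h2 : ChainIn i A y z) : ChainIn i A x z := by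
  obtain ⟨n, c, h0, hn, hmem, hadj⟩ := h1
  obtain ⟨n', c', h0', hn', hmem', hadj'⟩ := h2
  refine ⟨n + n', fun k => if k ≤ n then c k else c' (k - n), by simp [h0], ?_, ?_, ?_⟩
  · by_cases hz : n' = 0
    · subst hz; simp [hn, h0', ← hn']
    · have : ¬ (n + n' ≤ n) := by omega
      simp [this, hn']
  · intro k hk; dsimp only; split
    · exact hmem _ ‹_›
    · exact hmem' _ (by omega)
  · intro k hk; dsimp only
    by_cases hk1 : k + 1 ≤ n
    · rw [if_pos (by omega : k ≤ n), if_pos hk1]; exact hadj k (by omega)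
    · by_cases hk2 : k ≤ n
      · have hkn : k = n := by omega
        subst hkn
        rw [if_pos hk2, if_neg hk1]
        have e1 : k + 1 - k = 1 := by omega
        rw [e1, hn]
        rcases Nat.eq_zero_or_pos n' with h | h
        · omega
        · have h2 := hadj' 0 h; rwa [h0'] at h2
      · rw [if_neg hk2, if_neg hk1]
        have e2 : k + 1 - n = (k - n) + 1 := by omega
        rw [e2]; exact hadj' (k - n) (by omega)

lemma ChainIn.symm {i : ℕ} {A : Set Pt} {x y : Pt} (h : ChainIn i A x y) : ChainIn i A y x := by
  obtain ⟨n, c, h0, hn, hmem, hadj⟩ := h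
  refine ⟨n, fun k => c (n - k), by simp [hn], by simp [h0], fun k hk => hmem _ (by omega), ?_⟩
  intro k hk
  show cAdj i (c (n - k)) (c (n - (k + 1)))
  have e : n - k = (n - (k+1)) + 1 := by omega
  rw [e]
  exact cAdj_symm (hadj _ (by omega))

lemma ChainIn.mono {i : ℕ} {A B : Set Pt} (hAB : A ⊆ B) {x y : Pt} (h : ChainIn i A x y) :
    ChainIn i B x y := by
  obtain ⟨n, c, h0, hn, hmem, hadj⟩ := h
  exact ⟨n, c, h0, hn, fun k hk => hAB (hmem k hk), hadj⟩

lemma ChainIn.map {i : ℕ} {A B : Set Pt} (f : Pt → Pt) (hmem : ∀ p ∈ A, f p ∈ B)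
    (hadj : ∀ p q, p ∈ A → q ∈ A → cAdj i p q → cAdj i (f p) (f q))
    {x y : Pt} (h : ChainIn i A x y) : ChainIn i B (f x) (f y) := by
  obtain ⟨n, c, h0, hn, hm, ha⟩ := h
  exact ⟨n, fun k => f (c k), by show f (c 0) = f x; rw [h0], by show f (c n) = f y; rw [hn],
    fun k hk => hmem _ (hm k hk),
    fun k hk => hadj _ _ (hm k (by omega)) (hm _ (by omega)) (ha k hk)⟩

lemma chainIn_vert_up {i : ℕ} {S : Set Pt} {x y1 y2 : ℤ} (h12 : y1 ≤ y2)
    (hmem : ∀ y, y1 ≤ y → y ≤ y2 → (x, y) ∈ S) : ChainIn i S (x, y1) (x, y2) := by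
  refine ⟨(y2 - y1).toNat, fun k => (x, y1 + k), by simp, ?_, ?_, ?_⟩
  · show (x, y1 + ((y2 - y1).toNat : ℤ)) = (x, y2)
    rw [Prod.mk.injEq]; refine ⟨rfl, by omega⟩
  · intro k hk; exact hmem _ (by omega) (by omega)
  · intro k hk
    show cAdj i (x, y1 + (k:ℤ)) (x, y1 + ((k+1 : ℕ) : ℤ))
    exact cAdj_vert (by simp) rfl

lemma chainIn_vert {i : ℕ} {S : Set Pt} {x y1 y2 : ℤ}
    (hmem : ∀ y, min y1 y2 ≤ y → y ≤ max y1 y2 → (x, y) ∈ S) : ChainIn i S (x, y1) (x, y2) := by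
  rcases le_total y1 y2 with h | h
  · exact chainIn_vert_up h (fun y hy1 hy2 => hmem y (by omega) (by omega))
  · exact (chainIn_vert_up h (fun y hy1 hy2 => hmem y (by omega) (by omega))).symm

lemma chainIn_horiz_up {i : ℕ} {S : Set Pt} {y x1 x2 : ℤ} (h12 : x1 ≤ x2)
    (hmem : ∀ x, x1 ≤ x → x ≤ x2 → (x, y) ∈ S) : ChainIn i S (x1, y) (x2, y) := by
  refine ⟨(x2 - x1).toNat, fun k => (x1 + k, y), by simp, ?_, ?_, ?_⟩
  · show (x1 + ((x2 - x1).toNat : ℤ), y) = (x2, y)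
    rw [Prod.mk.injEq]; refine ⟨by omega, rfl⟩
  · intro k hk; exact hmem _ (by omega) (by omega)
  · intro k hk
    show cAdj i (x1 + (k:ℤ), y) (x1 + ((k+1 : ℕ) : ℤ), y)
    exact cAdj_horiz (by simp) rfl

lemma chainIn_horiz {i : ℕ} {S : Set Pt} {y x1 x2 : ℤ}
    (hmem : ∀ x, min x1 x2 ≤ x → x ≤ max x1 x2 → (x, y) ∈ S) : ChainIn i S (x1, y) (x2, y) := by
  rcases le_total x1 x2 with h | h
  · exact chainIn_horiz_up h (fun z h1 h2 => hmem z (by omega) (by omega))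
  · exact (chainIn_horiz_up h (fun z h1 h2 => hmem z (by omega) (by omega))).symm

-- §2 NoHole implies complement connected
lemma exists_bound {X : Set Pt} (hX : X.Finite) :
    ∃ M : ℕ, ∀ p ∈ X, p.1.natAbs ≤ M ∧ p.2.natAbs ≤ M := by
  classical
  refine ⟨hX.toFinset.sup (fun p => p.1.natAbs ⊔ p.2.natAbs), ?_⟩
  intro p hp
  have hmem : p ∈ hX.toFinset := hX.mem_toFinset.mpr hp
  have := Finset.le_sup (f := fun p : Pt => p.1.natAbs ⊔ p.2.natAbs) hmem
  exact ⟨le_trans le_sup_left this, le_trans le_sup_right this⟩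

lemma compl_conn {j : ℕ} {X : Set Pt} (hX : X.Finite) (hnh : NoHole j X) : Conn j Xᶜ := by
  obtain ⟨M, hM⟩ := exists_bound hX
  have hcolfree : ∀ x : ℤ, x.natAbs > M → ∀ y : ℤ, (x, y) ∈ Xᶜ := by
    intro x hx y hxy
    exact absurd (hM _ hxy).1 (by omega)
  have hrowfree : ∀ y : ℤ, y.natAbs > M → ∀ x : ℤ, (x, y) ∈ Xᶜ := by
    intro y hy x hxy
    exact absurd (hM _ hxy).2 (by omega)
  -- every complement point reaches the top zone
  have reach : ∀ p ∈ Xᶜ, ∃ q : Pt, (M : ℤ) < q.2 ∧ ChainIn j Xᶜ p q := by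
    intro p hp
    have hinf := hnh p hp
    have : ¬ compOf j Xᶜ p ⊆ (Set.Icc (-(M:ℤ)) M) ×ˢ (Set.Icc (-(M:ℤ)) M) := by
      intro hsub
      exact hinf (((Set.finite_Icc _ _).prod (Set.finite_Icc _ _)).subset hsub)
    obtain ⟨q, hqc, hqbox⟩ := Set.not_subset.mp this
    have hchain : ChainIn j Xᶜ p q := hqc
    simp only [Set.mem_prod, Set.mem_Icc, not_and_or] at hqbox
    by_cases hq1 : q.1.natAbs > M
    · refine ⟨(q.1, M + 1), by simp, hchain.trans ?_⟩
      have : ChainIn j Xᶜ (q.1, q.2) (q.1, (M:ℤ)+1) :=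
        chainIn_vert (fun y _ _ => hcolfree _ hq1 y)
      simpa using this
    · have hq2 : q.2.natAbs > M := by
        rcases hqbox with h | h <;> [skip; omega]
        exfalso; omega
      by_cases hq2' : (M:ℤ) < q.2
      · exact ⟨q, hq2', hchain⟩
      · have hq2'' : q.2 < -(M:ℤ) := by omega
        refine ⟨((M:ℤ)+1, (M:ℤ)+1), by simp, hchain.trans (ChainIn.trans (y := ((M:ℤ)+1, q.2)) ?_ ?_)⟩
        · have : ChainIn j Xᶜ (q.1, q.2) ((M:ℤ)+1, q.2) :=
            chainIn_horiz (fun x _ _ => hrowfree _ (by omega) x)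
          simpa using this
        · exact chainIn_vert (fun y _ _ => hcolfree ((M:ℤ)+1) (by omega) y)
  -- top zone is connected
  have topconn : ∀ q q' : Pt, (M:ℤ) < q.2 → (M:ℤ) < q'.2 → ChainIn j Xᶜ q q' := by
    intro q q' hq hq'
    have htopmem : ∀ r : Pt, (M:ℤ) < r.2 → r ∈ Xᶜ := by
      intro r hr
      exact hrowfree r.2 (by omega) r.1
    have h1 : ChainIn j Xᶜ (q.1, q.2) (q.1, max q.2 q'.2) :=
      chainIn_vert (fun y h1 h2 => htopmem _ (by simp at h1 h2 ⊢; omega))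
    have h2 : ChainIn j Xᶜ (q.1, max q.2 q'.2) (q'.1, max q.2 q'.2) :=
      chainIn_horiz (fun x _ _ => htopmem _ (by simp; omega))
    have h3 : ChainIn j Xᶜ (q'.1, q'.2) (q'.1, max q.2 q'.2) :=
      chainIn_vert (fun y h1 h2 => htopmem _ (by simp at h1 h2 ⊢; omega))
    have := (h1.trans h2).trans h3.symm
    simpa using this
  intro p hp p' hp'
  obtain ⟨q, hq, hc⟩ := reach p hp
  obtain ⟨q', hq', hc'⟩ := reach p' hp'
  exact (hc.trans (topconn q q' hq hq')).trans hc'.symm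

-- §3 row components are intervals
def rowSeg (k a b : ℤ) : Set Pt := {q | q.2 = k ∧ a ≤ q.1 ∧ q.1 ≤ b}

lemma mem_rowOf {X : Set Pt} {k : ℤ} {q : Pt} : q ∈ rowOf X k ↔ q ∈ X ∧ q.2 = k := Iff.rfl

lemma compOf_eq_of_mem {i : ℕ} {A : Set Pt} {p y : Pt} (hy : y ∈ compOf i A p) :
    compOf i A y = compOf i A p := by
  have hpy : ChainIn i A p y := hy
  ext z
  constructor
  · intro hz; exact ChainIn.trans hpy hz
  · intro hz; exact ChainIn.trans hpy.symm hz

lemma rowComp_struct {i : ℕ} {X : Set Pt} (hX : X.Finite) {p : Pt} (hp : p ∈ X) :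
    ∃ a b : ℤ, a ≤ p.1 ∧ p.1 ≤ b ∧ (∀ t, a ≤ t → t ≤ b → (t, p.2) ∈ X) ∧
      (a - 1, p.2) ∉ X ∧ (b + 1, p.2) ∉ X ∧
      compOf i (rowOf X p.2) p = rowSeg p.2 a b := by
  obtain ⟨M, hM⟩ := exists_bound hX
  obtain ⟨a, ⟨ha1, ha2⟩, hamin⟩ := Int.exists_least_of_bdd
    (P := fun a => a ≤ p.1 ∧ ∀ t, a ≤ t → t ≤ p.1 → (t, p.2) ∈ X)
    ⟨-(M:ℤ), fun z hz => by have := (hM _ (hz.2 z le_rfl hz.1)).1; simp at this; omega⟩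
    ⟨p.1, le_rfl, fun t h1 h2 => by have : t = p.1 := by omega
                                    rw [this]; simpa using hp⟩
  obtain ⟨b, ⟨hb1, hb2⟩, hbmax⟩ := Int.exists_greatest_of_bdd
    (P := fun b => p.1 ≤ b ∧ ∀ t, p.1 ≤ t → t ≤ b → (t, p.2) ∈ X)
    ⟨(M:ℤ), fun z hz => by have := (hM _ (hz.2 z hz.1 le_rfl)).1; simp at this; omega⟩
    ⟨p.1, le_rfl, fun t h1 h2 => by have : t = p.1 := by omega
                                    rw [this]; simpa using hp⟩
  have hall : ∀ t, a ≤ t → t ≤ b → (t, p.2) ∈ X := by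
    intro t h1 h2
    rcases le_total t p.1 with h | h
    · exact ha2 t h1 h
    · exact hb2 t h h2
  have hnota : (a - 1, p.2) ∉ X := by
    intro hmem
    have : a ≤ a - 1 := hamin _ ⟨by omega, fun t h1 h2 => by
      rcases eq_or_lt_of_le h1 with h | h
      · rw [← h]; exact hmem
      · exact ha2 t (by omega) h2⟩
    omega
  have hnotb : (b + 1, p.2) ∉ X := by
    intro hmem
    have : b + 1 ≤ b := hbmax _ ⟨by omega, fun t h1 h2 => by
      rcases eq_or_lt_of_le h2 with h | h
      · rw [h]; exact hmem
      · exact hb2 t h1 (by omega)⟩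
    omega
  refine ⟨a, b, ha1, hb1, hall, hnota, hnotb, ?_⟩
  ext q
  constructor
  · intro hq
    obtain ⟨n, c, h0, hn, hmem, hadj⟩ := hq
    suffices h : ∀ k ≤ n, c k ∈ rowSeg p.2 a b by rw [← hn]; exact h n le_rfl
    intro k
    induction k with
    | zero => intro _; rw [h0]; exact ⟨rfl, ha1, hb1⟩
    | succ k ih =>
      intro hk
      obtain ⟨hr, hxa, hxb⟩ := ih (by omega)
      obtain ⟨hd1, hd2⟩ := cAdj_dinf (hadj k (by omega))
      have hrow2 : c (k+1) ∈ X ∧ (c (k+1)).2 = p.2 := hmem (k+1) (by omega)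
      refine ⟨hrow2.2, ?_, ?_⟩
      · by_contra hcon
        have : c (k+1) = (a - 1, p.2) := by
          have := abs_le.mp hd1
          have hco : (c (k+1)).1 = a - 1 := by omega
          exact Prod.ext hco hrow2.2
        rw [this] at hrow2; exact hnota hrow2.1
      · by_contra hcon
        have : c (k+1) = (b + 1, p.2) := by
          have := abs_le.mp hd1
          have hco : (c (k+1)).1 = b + 1 := by omega
          exact Prod.ext hco hrow2.2
        rw [this] at hrow2; exact hnotb hrow2.1
  · rintro ⟨hq2, hqa, hqb⟩
    have : ChainIn i (rowOf X p.2) (p.1, p.2) (q.1, p.2) :=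
      chainIn_horiz (fun x h1 h2 => ⟨hall x (by omega) (by omega), rfl⟩)
    have hq : q = (q.1, p.2) := Prod.ext rfl hq2
    rw [hq]
    exact this

/-- The row component containing a given point. -/
def rowCompOf (i : ℕ) (X : Set Pt) (x : Pt) : Set Pt := compOf i (rowOf X x.2) x

lemma mem_rowCompOf {i : ℕ} {X : Set Pt} {x : Pt} (hx : x ∈ X) : x ∈ rowCompOf i X x :=
  chainIn_refl ⟨hx, rfl⟩

lemma isRowComp_rowCompOf {i : ℕ} {X : Set Pt} {x : Pt} (hx : x ∈ X) :
    IsRowComp i X (rowCompOf i X x) :=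
  ⟨x.2, x, ⟨hx, rfl⟩, rfl⟩

lemma rowComp_eq_rowCompOf {i : ℕ} {X : Set Pt} {r : Set Pt} (hr : IsRowComp i X r)
    {x : Pt} (hx : x ∈ r) : r = rowCompOf i X x := by
  obtain ⟨k, p, hp, rfl⟩ := hr
  have hrow : x.2 = k := (ChainIn.mem_right hx).2
  rw [rowCompOf, hrow]
  exact (compOf_eq_of_mem hx).symm

lemma rowComp_disj {i : ℕ} {X : Set Pt} {r s : Set Pt} (hr : IsRowComp i X r)
    (hs : IsRowComp i X s) {x : Pt} (hxr : x ∈ r) (hxs : x ∈ s) : r = s := by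
  rw [rowComp_eq_rowCompOf hr hxr, rowComp_eq_rowCompOf hs hxs]

lemma rowComp_subset {i : ℕ} {X : Set Pt} {r : Set Pt} (hr : IsRowComp i X r) : r ⊆ X := by
  obtain ⟨k, p, hp, rfl⟩ := hr
  intro q hq
  exact (ChainIn.mem_right hq).1

/-- structure version for an arbitrary row component -/
lemma isRowComp_struct {i : ℕ} {X : Set Pt} (hX : X.Finite) {r : Set Pt}
    (hr : IsRowComp i X r) :
    ∃ k a b : ℤ, a ≤ b ∧ r = rowSeg k a b ∧ (∀ t, a ≤ t → t ≤ b → (t, k) ∈ X) ∧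
      (a - 1, k) ∉ X ∧ (b + 1, k) ∉ X := by
  obtain ⟨k, p, hp, rfl⟩ := hr
  obtain ⟨hpX, hpk⟩ := mem_rowOf.mp hp
  obtain ⟨a, b, h1, h2, h3, h4, h5, h6⟩ := rowComp_struct (i := i) hX hpX
  subst hpk
  exact ⟨p.2, a, b, by omega, h6, h3, h4, h5⟩

-- §4 row component graph: connectivity and leaf existence
lemma setAdj_symm {i : ℕ} {A B : Set Pt} (h : setAdj i A B) : setAdj i B A := by
  obtain ⟨a, ha, b, hb, hab⟩ := h
  exact ⟨b, hb, a, ha, cAdj_symm hab⟩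

lemma rcgAdj_symm {i : ℕ} {X : Set Pt} {r s : Set Pt} (h : rcgAdj i X r s) :
    rcgAdj i X s r :=
  ⟨h.2.1, h.1, Ne.symm h.2.2.1, setAdj_symm h.2.2.2⟩

lemma adj_step {i : ℕ} {X : Set Pt} {x y : Pt} (hx : x ∈ X) (hy : y ∈ X)
    (hadj : cAdj i x y) :
    rowCompOf i X x = rowCompOf i X y ∨ rcgAdj i X (rowCompOf i X x) (rowCompOf i X y) := by
  by_cases hrow : x.2 = y.2
  · left
    have hmem : y ∈ rowCompOf i X x :=
      chainIn_step (mem_rowOf.mpr ⟨hx, rfl⟩) (mem_rowOf.mpr ⟨hy, hrow.symm⟩) hadj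
    exact rowComp_eq_rowCompOf (isRowComp_rowCompOf hx) hmem
  · right
    refine ⟨isRowComp_rowCompOf hx, isRowComp_rowCompOf hy, ?_, ?_⟩
    · intro heq
      have : y ∈ rowCompOf i X x := heq ▸ mem_rowCompOf hy
      exact hrow ((ChainIn.mem_right this).2).symm
    · exact ⟨x, mem_rowCompOf hx, y, mem_rowCompOf hy, hadj⟩

lemma rcg_reach {i : ℕ} {X : Set Pt} (hconn : Conn i X) {x y : Pt} (hx : x ∈ X)
    (hy : y ∈ X) :
    Relation.ReflTransGen (rcgAdj i X) (rowCompOf i X x) (rowCompOf i X y) := by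
  obtain ⟨n, c, h0, hn, hmem, hadj⟩ := hconn x hx y hy
  suffices h : ∀ k ≤ n, Relation.ReflTransGen (rcgAdj i X) (rowCompOf i X (c 0)) (rowCompOf i X (c k)) by
    have := h n le_rfl; rwa [h0, hn] at this
  intro k
  induction k with
  | zero => intro _; exact Relation.ReflTransGen.refl
  | succ k ih =>
    intro hk
    rcases adj_step (hmem k (by omega)) (hmem (k+1) (by omega)) (hadj k (by omega)) with h | h
    · rw [← h]; exact ih (by omega)
    · exact (ih (by omega)).tail h

lemma comps_finite {i : ℕ} {X : Set Pt} (hX : X.Finite) :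
    {r : Set Pt | IsRowComp i X r}.Finite :=
  hX.finite_subsets.subset (fun r hr => rowComp_subset hr)

lemma exists_leaf {i : ℕ} {X : Set Pt} (hX : X.Finite) (hconn : Conn i X)
    (hacyc : RCGAcyclic i X) {r s : Set Pt} (hr : IsRowComp i X r) (hs : IsRowComp i X s)
    (hrs : r ≠ s) :
    ∃ T N : Set Pt, IsRowComp i X T ∧ rcgAdj i X T N ∧ ∀ s', rcgAdj i X T s' → s' = N := by
  classical
  set CF := (comps_finite (i := i) hX).toFinset with hCF
  have hmemCF : ∀ {t : Set Pt}, IsRowComp i X t → t ∈ CF := by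
    intro t ht; rw [hCF, Set.Finite.mem_toFinset]; exact ht
  set P : ℕ → Prop := fun n => ∃ f : ℕ → Set Pt,
    (∀ t ≤ n, IsRowComp i X (f t)) ∧
    (∀ t ≤ n, ∀ t' ≤ n, f t = f t' → t = t') ∧
    (∀ t < n, rcgAdj i X (f t) (f (t + 1))) with hP
  have hbound : ∀ {n : ℕ}, P n → n + 1 ≤ CF.card := by
    intro n hn
    obtain ⟨f, hf1, hf2, _⟩ := hn
    have : ((Finset.range (n+1)).image f).card = n + 1 := by
      rw [Finset.card_image_of_injOn, Finset.card_range]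
      intro t ht t' ht' heq
      simp only [Finset.coe_range, Set.mem_Iio] at ht ht'
      exact hf2 t (by omega) t' (by omega) heq
    calc n + 1 = ((Finset.range (n+1)).image f).card := this.symm
    _ ≤ CF.card := Finset.card_le_card (by
        intro u hu
        simp only [Finset.mem_image, Finset.mem_range] at hu
        obtain ⟨t, ht, rfl⟩ := hu
        exact hmemCF (hf1 t (by omega)))
  -- an initial edge
  obtain ⟨k1, p1, hp1, rfl⟩ := hr
  obtain ⟨k2, p2, hp2, rfl⟩ := hs
  have hP1 : P 1 := by
    have hreach := rcg_reach hconn (mem_rowOf.mp hp1).1 (mem_rowOf.mp hp2).1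
    have hr1 : rowCompOf i X p1 = compOf i (rowOf X k1) p1 := by
      rw [rowCompOf, (mem_rowOf.mp hp1).2]
    have hr2 : rowCompOf i X p2 = compOf i (rowOf X k2) p2 := by
      rw [rowCompOf, (mem_rowOf.mp hp2).2]
    rw [hr1, hr2] at hreach
    obtain ⟨c, hc, -⟩ := Relation.ReflTransGen.cases_head hreach |>.resolve_left hrs
    refine ⟨fun t => if t = 0 then compOf i (rowOf X k1) p1 else c, ?_, ?_, ?_⟩
    · intro t _; dsimp only; split
      · exact ⟨k1, p1, hp1, rfl⟩
      · exact hc.2.1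
    · intro t ht t' ht' heq
      dsimp only at heq
      by_cases h0 : t = 0 <;> by_cases h0' : t' = 0 <;> simp [h0, h0'] at heq ⊢ <;> try omega
      · exact absurd heq hc.2.2.1
      · exact absurd heq.symm hc.2.2.1
    · intro t ht
      have : t = 0 := by omega
      subst this; simpa using hc
  have hcard1 : 1 ≤ CF.card := by have := hbound hP1; omega
  set N' := Nat.findGreatest P CF.card with hN'
  have hPN' : P N' := Nat.findGreatest_spec hcard1 hP1
  have hN'1 : 1 ≤ N' := Nat.le_findGreatest hcard1 hP1
  obtain ⟨f, hf1, hf2, hf3⟩ := hPN'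
  refine ⟨f N', f (N' - 1), hf1 N' le_rfl, ?_, ?_⟩
  · have := hf3 (N' - 1) (by omega)
    have e : N' - 1 + 1 = N' := by omega
    rw [e] at this
    exact rcgAdj_symm this
  · intro s' hadj
    by_contra hne
    by_cases hmem : ∃ j ≤ N', f j = s'
    · obtain ⟨j, hj, rfl⟩ := hmem
      have hjN : j ≠ N' := by
        intro h; rw [h] at hadj; exact hadj.2.2.1 rfl
      have hjN1 : j ≠ N' - 1 := by
        intro h; rw [h] at hne; exact hne rfl
      have hj2 : j + 2 ≤ N' := by omega
      refine hacyc ⟨N' - j + 1, fun t => f (j + t), by omega, ?_, ?_, ?_, ?_⟩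
      · intro t ht; exact hf1 _ (by omega)
      · intro t ht t' ht' heq
        have := hf2 (j + t) (by omega) (j + t') (by omega) heq
        omega
      · intro t ht
        show rcgAdj i X (f (j + t)) (f (j + (t + 1)))
        have e : j + (t + 1) = (j + t) + 1 := by omega
        rw [e]
        exact hf3 (j + t) (by omega)
      · show rcgAdj i X (f (j + (N' - j + 1 - 1))) (f (j + 0))
        have e2 : j + (N' - j + 1 - 1) = N' := by omega
        rw [e2, Nat.add_zero]
        exact hadj
    · push_neg at hmem
      have hPext : P (N' + 1) := by
        refine ⟨fun t => if t ≤ N' then f t else s', ?_, ?_, ?_⟩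
        · intro t ht; dsimp only; split
          · exact hf1 _ ‹_›
          · exact hadj.2.1
        · intro t ht t' ht' heq
          dsimp only at heq
          by_cases h1 : t ≤ N' <;> by_cases h2 : t' ≤ N'
          · rw [if_pos h1, if_pos h2] at heq; exact hf2 t h1 t' h2 heq
          · rw [if_pos h1, if_neg h2] at heq; exact absurd heq (hmem t h1)
          · rw [if_neg h1, if_pos h2] at heq; exact absurd heq.symm (hmem t' h2)
          · omega
        · intro t ht
          show rcgAdj i X (if t ≤ N' then f t else s') (if t + 1 ≤ N' then f (t + 1) else s')
          by_cases h1 : t + 1 ≤ N'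
          · rw [if_pos (by omega : t ≤ N'), if_pos h1]; exact hf3 t (by omega)
          · have ht' : t = N' := by omega
            subst ht'
            rw [if_pos le_rfl, if_neg h1]
            exact hadj
      have := hbound hPext
      exact Nat.findGreatest_is_greatest (by omega : N' < N' + 1) (by omega) hPext

-- §6 homotopy plumbing
lemma contractible_singleton {i : ℕ} {X : Set Pt} {p0 : Pt} (h : X = {p0}) :
    Contractible i (subAdj i X) := by
  have hmem : ∀ x : ↥X, x.1 = p0 := by
    intro x
    have : x.1 ∈ ({p0} : Set Pt) := by rw [← h]; exact x.2
    simpa using this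
  refine ⟨⟨p0, by simp [h]⟩, 0, fun x _ => x, fun x => rfl, ?_, ?_⟩
  · intro x
    exact Subtype.ext (hmem x)
  · intro x y s t _ _ _
    show cAdj i x.1 y.1
    rw [hmem x, hmem y]; exact cAdj_refl i p0

lemma natAdj_cases {s t : ℕ} (h : natAdj s t) : s = t ∨ s + 1 = t ∨ t + 1 = s := h

lemma contractible_step {i : ℕ} {X X' : Set Pt} (hsub : X' ⊆ X) (r : Pt → Pt)
    (hrX : ∀ p ∈ X, r p ∈ X')
    (hcont : ∀ p q, p ∈ X → q ∈ X → cAdj i p q → cAdj i (r p) (r q))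
    (hstep : ∀ p ∈ X, cAdj i p (r p))
    (hcross : i ≠ 1 → ∀ p q, p ∈ X → q ∈ X → cAdj i p q → cAdj i p (r q))
    (hcontr : Contractible i (subAdj i X')) : Contractible i (subAdj i X) := by
  obtain ⟨x₀', m', H', hH0, hHm, hHc⟩ := hcontr
  have hH'mem : ∀ (z : ↥X') (t : ℕ), (H' z t).1 ∈ X := fun z t => hsub (H' z t).2
  set F : ↥X → ℕ → ↥X := fun x t =>
    if t = 0 then x else ⟨(H' ⟨r x.1, hrX _ x.2⟩ (t - 1)).1, hH'mem _ _⟩ with hF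
  have hF0 : ∀ x : ↥X, F x 0 = x := fun x => rfl
  have hFv : ∀ (x : ↥X) (t : ℕ), t ≠ 0 → (F x t).1 = (H' ⟨r x.1, hrX _ x.2⟩ (t - 1)).1 := by
    intro x t ht; rw [hF]; simp only [if_neg ht]
  have hF1 : ∀ x : ↥X, (F x 1).1 = r x.1 := by
    intro x
    rw [hFv x 1 one_ne_zero]
    show (H' ⟨r x.1, hrX _ x.2⟩ 0).1 = r x.1
    rw [hH0]; rfl
  have hval : ∀ (z w : ↥X') (u v : ℕ), subAdj i X' (H' z u) (H' w v) →
      cAdj i (H' z u).1 (H' w v).1 := fun _ _ _ _ h => h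
  refine ⟨⟨x₀'.1, hsub x₀'.2⟩, m' + 1, F, hF0, ?_, ?_⟩
  · intro x
    apply Subtype.ext
    rw [hFv x (m' + 1) (by omega)]
    show (H' _ (m' + 1 - 1)).1 = x₀'.1
    have e : m' + 1 - 1 = m' := by omega
    rw [e, hHm]
  · intro x y s t hs ht hadj
    show cAdj i (F x s).1 (F y t).1
    -- basic step adjacency within one track
    have key : ∀ (x : ↥X) (u : ℕ), u + 1 ≤ m' + 1 → cAdj i (F x u).1 (F x (u + 1)).1 := by
      intro x u hu
      by_cases h0 : u = 0
      · subst h0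
        rw [hF0, hF1]
        exact hstep _ x.2
      · rw [hFv x u h0, hFv x (u+1) (by omega)]
        have e : u + 1 - 1 = (u - 1) + 1 := by omega
        rw [e]
        refine hval _ _ _ _ (hHc _ _ (u-1) (u-1+1) (by omega) (by omega) ?_)
        by_cases hi : i = 1
        · subst hi; rw [prodAdj, if_pos rfl]
          exact Or.inr ⟨rfl, Or.inr (Or.inl rfl)⟩
        · rw [prodAdj, if_neg hi]
          exact ⟨hcont _ _ x.2 x.2 (cAdj_refl i x.1), Or.inr (Or.inl rfl)⟩
    have keyc : ∀ (x y : ↥X) (u v : ℕ), u ≠ 0 → v ≠ 0 → u ≤ m' + 1 → v ≤ m' + 1 →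
        prodAdj i (subAdj i X') (⟨r x.1, hrX _ x.2⟩, u - 1) (⟨r y.1, hrX _ y.2⟩, v - 1) →
        cAdj i (F x u).1 (F y v).1 := by
      intro x y u v hu hv huu hvv hp
      rw [hFv x u hu, hFv y v hv]
      exact hval _ _ _ _ (hHc _ _ _ _ (by omega) (by omega) hp)
    by_cases hi : i = 1
    · subst hi
      rw [prodAdj, if_pos rfl] at hadj
      rcases hadj with ⟨hxy, hst⟩ | ⟨hxy, hst⟩
      · have hst' : s = t := hst
        subst hst'
        by_cases h0 : s = 0
        · subst h0; rw [hF0, hF0]; exact hxy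
        · refine keyc x y s s h0 h0 hs ht ?_
          rw [prodAdj, if_pos rfl]
          exact Or.inl ⟨hcont _ _ x.2 y.2 hxy, rfl⟩
      · have hxy' : x = y := hxy
        subst hxy'
        rcases natAdj_cases hst with h | h | h
        · have : s = t := h
          subst this
          exact cAdj_refl 1 _
        · have : t = s + 1 := h.symm
          subst this
          exact key x s ht
        · have : s = t + 1 := h.symm
          subst this
          exact cAdj_symm (key x t hs)
    · rw [prodAdj, if_neg hi] at hadj
      obtain ⟨hxy, hst⟩ := hadj
      have hxy' : cAdj i x.1 y.1 := hxy
      by_cases hs0 : s = 0 <;> by_cases ht0 : t = 0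
      · subst hs0; subst ht0; rw [hF0, hF0]; exact hxy'
      · subst hs0
        have htt : t = 1 := by rcases natAdj_cases hst with h|h|h <;> omega
        subst htt
        rw [hF0, hF1]
        exact hcross hi _ _ x.2 y.2 hxy'
      · subst ht0
        have hss : s = 1 := by rcases natAdj_cases hst with h|h|h <;> omega
        subst hss
        rw [hF0, hF1]
        exact cAdj_symm (hcross hi _ _ y.2 x.2 (cAdj_symm hxy'))
      · refine keyc x y s t hs0 ht0 hs ht ?_
        rw [prodAdj, if_neg hi]
        refine ⟨hcont _ _ x.2 y.2 hxy', ?_⟩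
        rcases natAdj_cases hst with h|h|h
        · left; omega
        · right; left; omega
        · right; right; omega

lemma conn_of_retract {i : ℕ} {X X' : Set Pt} (r : Pt → Pt)
    (hrX : ∀ p ∈ X, r p ∈ X') (hfix : ∀ p ∈ X', r p = p)
    (hcont : ∀ p q, p ∈ X → q ∈ X → cAdj i p q → cAdj i (r p) (r q))
    (hX'X : X' ⊆ X) (hconn : Conn i X) : Conn i X' := by
  intro x hx y hy
  have := ChainIn.map r hrX hcont (hconn x (hX'X hx) y (hX'X hy))
  rwa [hfix x hx, hfix y hy] at this

lemma conn_compl_extend {j : ℕ} {X X' : Set Pt} (hsub : X' ⊆ X)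
    (hesc : ∀ p ∈ X, p ∉ X' → ∃ w, w ∈ Xᶜ ∧ cAdj j p w) (hXc : Conn j Xᶜ) :
    Conn j X'ᶜ := by
  have hcc : Xᶜ ⊆ X'ᶜ := Set.compl_subset_compl.mpr hsub
  have reach : ∀ a ∈ X'ᶜ, ∃ w ∈ Xᶜ, ChainIn j X'ᶜ a w := by
    intro a ha
    by_cases haX : a ∈ X
    · obtain ⟨w, hw, hadj⟩ := hesc a haX ha
      exact ⟨w, hw, chainIn_step ha (hcc hw) hadj⟩
    · exact ⟨a, haX, chainIn_refl ha⟩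
  intro a ha b hb
  obtain ⟨w, hw, hcw⟩ := reach a ha
  obtain ⟨w', hw', hcw'⟩ := reach b hb
  exact (hcw.trans ((hXc w hw w' hw').mono hcc)).trans hcw'.symm

-- §7 removal constructions
lemma simple_point_removal {i j : ℕ} {X : Set Pt} {p q' : Pt}
    (hp : p ∈ X) (hq : q' ∈ X) (hne : q' ≠ p) (hpq : cAdj i p q')
    (hsimp : ∀ z ∈ X, z ≠ p → cAdj i z p → cAdj i z q')
    (hconn : Conn i X) (hXc : Conn j Xᶜ)
    (hwit : ∃ w, w ∉ X ∧ cAdj j p w) :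
    Conn i (X \ {p}) ∧ Conn j (X \ {p})ᶜ ∧
      (Contractible i (subAdj i (X \ {p})) → Contractible i (subAdj i X)) := by
  set r : Pt → Pt := fun z => if z = p then q' else z with hr
  have hrval : ∀ z, z ≠ p → r z = z := by intro z hz; rw [hr]; simp [hz]
  have hrp : r p = q' := by rw [hr]; simp
  have hrX : ∀ z ∈ X, r z ∈ X \ {p} := by
    intro z hz
    by_cases h : z = p
    · subst h; rw [hrp]; exact ⟨hq, hne⟩
    · rw [hrval z h]; exact ⟨hz, h⟩
  have hcont : ∀ z w, z ∈ X → w ∈ X → cAdj i z w → cAdj i (r z) (r w) := by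
    intro z w hz hw hadj
    by_cases h1 : z = p <;> by_cases h2 : w = p
    · rw [h1, h2]; exact cAdj_refl i _
    · rw [h1, hrp, hrval w h2]
      rw [h1] at hadj
      exact cAdj_symm (hsimp w hw h2 (cAdj_symm hadj))
    · rw [h2, hrp, hrval z h1]
      rw [h2] at hadj
      exact hsimp z hz h1 hadj
    · rw [hrval z h1, hrval w h2]; exact hadj
  have hstep : ∀ z ∈ X, cAdj i z (r z) := by
    intro z hz
    by_cases h : z = p
    · subst h; rw [hrp]; exact hpq
    · rw [hrval z h]; exact cAdj_refl i z
  have hcross : ∀ z w, z ∈ X → w ∈ X → cAdj i z w → cAdj i z (r w) := by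
    intro z w hz hw hadj
    by_cases h2 : w = p
    · rw [h2, hrp]
      rw [h2] at hadj
      by_cases h1 : z = p
      · rw [h1]; exact hpq
      · exact hsimp z hz h1 hadj
    · rw [hrval w h2]; exact hadj
  refine ⟨?_, ?_, ?_⟩
  · exact conn_of_retract r hrX (fun z hz => hrval z hz.2) hcont Set.diff_subset hconn
  · refine conn_compl_extend Set.diff_subset ?_ hXc
    intro z hz hz'
    have : z = p := by
      by_contra h; exact hz' ⟨hz, h⟩
    subst this
    obtain ⟨w, hw1, hw2⟩ := hwit
    exact ⟨w, hw1, hw2⟩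
  · exact contractible_step Set.diff_subset r hrX hcont hstep (fun _ => hcross)

lemma cAdj_one_coord {z w : Pt} (h : cAdj 1 z w) :
    (z.2 = w.2 ∧ (z.1 = w.1 ∨ z.1 = w.1 + 1 ∨ w.1 = z.1 + 1)) ∨
    (z.1 = w.1 ∧ (z.2 = w.2 + 1 ∨ w.2 = z.2 + 1)) := by
  have hd := cAdj_one h
  rcases abs_cases (z.1 - w.1) with ⟨e1, f1⟩ | ⟨e1, f1⟩ <;>
    rcases abs_cases (z.2 - w.2) with ⟨e2, f2⟩ | ⟨e2, f2⟩ <;>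
      rw [e1, e2] at hd <;> omega

lemma mem_rowSeg {z : Pt} {k a b : ℤ} : z ∈ rowSeg k a b ↔ z.2 = k ∧ a ≤ z.1 ∧ z.1 ≤ b :=
  Iff.rfl

def pushMap (k a b ε : ℤ) : Pt → Pt :=
  fun z => if z.2 = k ∧ a ≤ z.1 ∧ z.1 ≤ b then (z.1, k + ε) else z

lemma pushMap_in {k a b ε : ℤ} {z : Pt} (hz : z ∈ rowSeg k a b) :
    pushMap k a b ε z = (z.1, k + ε) := by
  rw [pushMap, if_pos (mem_rowSeg.mp hz)]

lemma pushMap_out {k a b ε : ℤ} {z : Pt} (hz : z ∉ rowSeg k a b) :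
    pushMap k a b ε z = z := by
  rw [pushMap, if_neg (fun h => hz (mem_rowSeg.mpr h))]

set_option maxHeartbeats 1600000 in
lemma pushdown_removal {j : ℕ} {X : Set Pt} {k a b ε : ℤ} (hε : ε = 1 ∨ ε = -1)
    (hT : ∀ t, a ≤ t → t ≤ b → (t, k) ∈ X)
    (hB : ∀ t, a ≤ t → t ≤ b → (t, k + ε) ∈ X)
    (hL : (a - 1, k) ∉ X) (hR : (b + 1, k) ∉ X)
    (hO : ∀ t, a ≤ t → t ≤ b → (t, k - ε) ∉ X)
    (hconn : Conn 1 X) (hXc : Conn j Xᶜ) :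
    Conn 1 (X \ rowSeg k a b) ∧ Conn j (X \ rowSeg k a b)ᶜ ∧
      (Contractible 1 (subAdj 1 (X \ rowSeg k a b)) → Contractible 1 (subAdj 1 X)) := by
  have hmemT : ∀ z : Pt, z ∈ rowSeg k a b ↔ z.2 = k ∧ a ≤ z.1 ∧ z.1 ≤ b :=
    fun z => mem_rowSeg
  set T := rowSeg k a b with hTdef
  set r := pushMap k a b ε with hr
  have hrin : ∀ z : Pt, z ∈ T → r z = (z.1, k + ε) := fun z hz => pushMap_in hz
  have hrout : ∀ z : Pt, z ∉ T → r z = z := fun z hz => pushMap_out hz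
  have hrX : ∀ z ∈ X, r z ∈ X \ T := by
    intro z hz
    by_cases h : z ∈ T
    · obtain ⟨h1, h2, h3⟩ := (hmemT z).mp h
      rw [hrin z h]
      refine ⟨hB z.1 h2 h3, ?_⟩
      rw [hmemT]; intro hcon
      have : k + ε = k := hcon.1
      omega
    · rw [hrout z h]; exact ⟨hz, h⟩
  have hcont : ∀ z w, z ∈ X → w ∈ X → cAdj 1 z w → cAdj 1 (r z) (r w) := by
    have main : ∀ z w, z ∈ X → w ∈ X → cAdj 1 z w → z ∈ T → cAdj 1 (r z) (r w) := by
      intro z w hz hw hadj h1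
      obtain ⟨e1, e2, e3⟩ := (hmemT z).mp h1
      by_cases h2 : w ∈ T
      · rw [hrin z h1, hrin w h2]
        obtain ⟨f1, _, _⟩ := (hmemT w).mp h2
        rcases cAdj_one_coord hadj with ⟨g1, g2⟩ | ⟨g1, g2⟩
        · refine cAdj_horiz ?_ rfl
          dsimp only
          rcases g2 with g | g | g <;> rw [abs_le] <;> omega
        · refine cAdj_horiz ?_ rfl
          dsimp only
          rw [abs_le]; omega
      · rw [hrin z h1, hrout w h2]
        rcases cAdj_one_coord hadj with ⟨g1, g2⟩ | ⟨g1, g2⟩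
        · exfalso
          have hwk : w.2 = k := by omega
          have hwx : w.1 < a ∨ b < w.1 := by
            by_contra hcon
            push_neg at hcon
            exact h2 ((hmemT w).mpr ⟨hwk, hcon.1, hcon.2⟩)
          have hwab : w.1 = a - 1 ∨ w.1 = b + 1 := by omega
          rcases hwab with h | h
          · apply hL; have he : w = (a-1, k) := Prod.ext h hwk; rwa [he] at hw
          · apply hR; have he : w = (b+1, k) := Prod.ext h hwk; rwa [he] at hw
        · have hy : w.2 = k + ε ∨ w.2 = k - ε := by
            have hne : w.2 ≠ k := by
              intro hcon
              exact h2 ((hmemT w).mpr ⟨hcon, by omega, by omega⟩)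
            rcases hε with h | h <;> omega
          rcases hy with h | h
          · have he : w = (z.1, k + ε) := Prod.ext (by omega) h
            rw [he]; exact cAdj_refl 1 _
          · exfalso
            apply hO z.1 e2 e3
            have he : w = (z.1, k - ε) := Prod.ext (by omega) h
            rwa [he] at hw
    intro z w hz hw hadj
    by_cases h1 : z ∈ T
    · exact main z w hz hw hadj h1
    · by_cases h2 : w ∈ T
      · exact cAdj_symm (main w z hw hz (cAdj_symm hadj) h2)
      · rw [hrout z h1, hrout w h2]; exact hadj
  have hstep : ∀ z ∈ X, cAdj 1 z (r z) := by
    intro z hz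
    by_cases h : z ∈ T
    · rw [hrin z h]
      obtain ⟨e1, _, _⟩ := (hmemT z).mp h
      refine cAdj_vert ?_ rfl
      dsimp only
      rw [e1]
      have : k - (k + ε) = -ε := by ring
      rw [this]
      rcases hε with h | h <;> simp [h]
    · rw [hrout z h]; exact cAdj_refl 1 z
  refine ⟨?_, ?_, ?_⟩
  · exact conn_of_retract r hrX (fun z hz => hrout z hz.2) hcont Set.diff_subset hconn
  · refine conn_compl_extend Set.diff_subset ?_ hXc
    intro z hz hz'
    have hzT : z ∈ T := by
      by_contra h; exact hz' ⟨hz, h⟩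
    obtain ⟨e1, e2, e3⟩ := (hmemT z).mp hzT
    refine ⟨(z.1, k - ε), hO z.1 e2 e3, ?_⟩
    refine cAdj_vert ?_ rfl
    dsimp only
    rw [e1]
    have : k - (k - ε) = ε := by ring
    rw [this]
    rcases hε with h | h <;> simp [h]
  · exact contractible_step Set.diff_subset r hrX hcont hstep (fun h => absurd rfl h)

-- §5a parity machinery
def crossC (p u v : Pt) : ZMod 2 :=
  if ((u.1 = p.1 - 1 ∧ v.1 = p.1) ∨ (u.1 = p.1 ∧ v.1 = p.1 - 1)) ∧ u.2 + v.2 ≤ 2 * p.2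
  then 1 else 0

def rayC (p w : Pt) : ZMod 2 := if w.1 = p.1 ∧ w.2 ≤ p.2 then 1 else 0

def sideC (c : ℤ) (w : Pt) : ZMod 2 := if w.1 ≤ c then 1 else 0

def crossH (f Y : ℤ) (u v : Pt) : ZMod 2 :=
  if ((u.1 = f ∧ v.1 = f + 1) ∨ (u.1 = f + 1 ∧ v.1 = f)) ∧ 2 * Y - 1 ≤ u.2 + v.2
  then 1 else 0

lemma z2_add_self : ∀ x : ZMod 2, x + x = 0 := by decide

lemma z2_cancel : ∀ a b c : ZMod 2, a + b + (b + c) = a + c := by decide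

lemma z2_eq_of_add : ∀ a b : ZMod 2, a + b = 0 → a = b := by decide

lemma tele2 (g : ℕ → ZMod 2) (n : ℕ) :
    (∑ s ∈ Finset.range n, (g s + g (s + 1))) = g 0 + g n := by
  induction n with
  | zero => rw [Finset.sum_range_zero, z2_add_self]
  | succ n ih =>
    rw [Finset.sum_range_succ, ih]
    have : g 0 + g n + (g n + g (n+1)) = g 0 + g (n+1) := z2_cancel _ _ _
    exact this

/-- partition of the line-crossing indicator into low and high parts -/
lemma cross_partition {f Y : ℤ} (u v : Pt) (hd : |u.1 - v.1| ≤ 1) :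
    crossC (f + 1, Y - 1) u v + crossH f Y u v = sideC f u + sideC f v := by
  rw [abs_le] at hd
  unfold crossC crossH sideC
  dsimp only
  split_ifs <;> first | rfl | (exfalso; omega) | decide

/-- vertical invariance: moving the base point down by one -/
lemma cross_vert {p u v : Pt} (hd1 : |u.1 - v.1| ≤ 1) (hd2 : |u.2 - v.2| ≤ 1)
    (hu1 : ¬(u.1 = p.1 ∧ u.2 = p.2)) (hu2 : ¬(u.1 = p.1 ∧ u.2 = p.2 - 1))
    (hv1 : ¬(v.1 = p.1 ∧ v.2 = p.2)) (hv2 : ¬(v.1 = p.1 ∧ v.2 = p.2 - 1)) :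
    crossC p u v = crossC (p.1, p.2 - 1) u v := by
  rw [abs_le] at hd1 hd2
  unfold crossC
  dsimp only
  split_ifs <;> first | rfl | (exfalso; omega)

/-- horizontal invariance: moving the base point right by one, against the ray -/
lemma cross_horiz {p u v : Pt} (hd1 : |u.1 - v.1| ≤ 1) (hd2 : |u.2 - v.2| ≤ 1)
    (hu1 : ¬(u.1 = p.1 ∧ u.2 = p.2)) (hu2 : ¬(u.1 = p.1 + 1 ∧ u.2 = p.2))
    (hv1 : ¬(v.1 = p.1 ∧ v.2 = p.2)) (hv2 : ¬(v.1 = p.1 + 1 ∧ v.2 = p.2)) :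
    crossC p u v + crossC (p.1 + 1, p.2) u v = rayC p u + rayC p v := by
  rw [abs_le] at hd1 hd2
  unfold crossC rayC
  dsimp only
  split_ifs <;> first | rfl | (exfalso; omega) | decide

/-- diagonal invariance (up-right), for axis-parallel steps -/
lemma cross_diag_up {p u v : Pt} (hd1 : |u.1 - v.1| ≤ 1) (hd2 : |u.2 - v.2| ≤ 1)
    (hax : u.1 = v.1 ∨ u.2 = v.2)
    (hu1 : ¬(u.1 = p.1 ∧ u.2 = p.2)) (hu2 : ¬(u.1 = p.1 + 1 ∧ u.2 = p.2 + 1))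
    (hv1 : ¬(v.1 = p.1 ∧ v.2 = p.2)) (hv2 : ¬(v.1 = p.1 + 1 ∧ v.2 = p.2 + 1)) :
    crossC p u v + crossC (p.1 + 1, p.2 + 1) u v = rayC p u + rayC p v := by
  rw [abs_le] at hd1 hd2
  unfold crossC rayC
  dsimp only
  split_ifs <;> first | rfl | (exfalso; omega) | decide

/-- diagonal invariance (down-right), for axis-parallel steps -/
lemma cross_diag_down {p u v : Pt} (hd1 : |u.1 - v.1| ≤ 1) (hd2 : |u.2 - v.2| ≤ 1)
    (hax : u.1 = v.1 ∨ u.2 = v.2)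
    (hu1 : ¬(u.1 = p.1 ∧ u.2 = p.2)) (hu2 : ¬(u.1 = p.1 + 1 ∧ u.2 = p.2 - 1))
    (hv1 : ¬(v.1 = p.1 ∧ v.2 = p.2)) (hv2 : ¬(v.1 = p.1 + 1 ∧ v.2 = p.2 - 1)) :
    crossC p u v + crossC (p.1 + 1, p.2 - 1) u v = rayC p u + rayC p v := by
  rw [abs_le] at hd1 hd2
  unfold crossC rayC
  dsimp only
  split_ifs <;> first | rfl | (exfalso; omega) | decide

lemma crossH_row {f Y : ℤ} {u v : Pt} (hu : u.2 = Y) (hv : v.2 = Y) (hd : |u.1 - v.1| ≤ 1) :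
    crossH f Y u v = sideC f u + sideC f v := by
  rw [abs_le] at hd
  unfold crossH sideC
  split_ifs <;> first | rfl | (exfalso; omega) | decide

lemma z2_move : ∀ a b c : ZMod 2, a + b = c → a = c + b := by decide

set_option maxHeartbeats 1000000 in
lemma acyclic_of_compl_conn {i j : ℕ} (hij : (i = 1 ∧ j = 2) ∨ (i = 2 ∧ j = 1))
    {X : Set Pt} (hX : X.Finite) (hXc : Conn j Xᶜ) : RCGAcyclic i X := by
  classical
  rintro ⟨kk, r, hk3, hcomp, hinj, hedge, hwrap⟩
  -- successor along the cycle
  have hnxtdef : ∀ t : ℕ, ∃ u : ℕ, u = if t + 1 < kk then t + 1 else 0 := fun t => ⟨_, rfl⟩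
  choose nxt hnxt using hnxtdef
  have hnxtlt : ∀ t, t < kk → nxt t < kk := by
    intro t ht; rw [hnxt]; split <;> omega
  have hedge' : ∀ t, t < kk → rcgAdj i X (r t) (r (nxt t)) := by
    intro t ht
    rw [hnxt]
    split
    · exact hedge t ‹_›
    · have he : t = kk - 1 := by omega
      rw [he]; exact hwrap
  -- interval structure of the components
  have hstr : ∀ t, ∃ yab : ℤ × ℤ × ℤ, t < kk →
      yab.2.1 ≤ yab.2.2 ∧ r t = rowSeg yab.1 yab.2.1 yab.2.2 ∧
      (∀ s, yab.2.1 ≤ s → s ≤ yab.2.2 → (s, yab.1) ∈ X) ∧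
      (yab.2.1 - 1, yab.1) ∉ X ∧ (yab.2.2 + 1, yab.1) ∉ X := by
    intro t
    by_cases ht : t < kk
    · obtain ⟨k, a, b, h1, h2, h3, h4, h5⟩ := isRowComp_struct hX (hcomp t ht)
      exact ⟨(k, a, b), fun _ => ⟨h1, h2, h3, h4, h5⟩⟩
    · exact ⟨(0, 0, 0), fun h => absurd h ht⟩
  choose yab hyab using hstr
  have hAB : ∀ t, t < kk → (yab t).2.1 ≤ (yab t).2.2 := fun t ht => (hyab t ht).1
  have hreq : ∀ t, t < kk → r t = rowSeg (yab t).1 (yab t).2.1 (yab t).2.2 :=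
    fun t ht => (hyab t ht).2.1
  have hmemX : ∀ t, t < kk → ∀ s, (yab t).2.1 ≤ s → s ≤ (yab t).2.2 → (s, (yab t).1) ∈ X :=
    fun t ht => (hyab t ht).2.2.1
  have hRR : ∀ t, t < kk → ((yab t).2.2 + 1, (yab t).1) ∉ X := fun t ht => (hyab t ht).2.2.2.2
  have hfact : ∀ t, t < kk → ∀ pt ∈ r t,
      pt.2 = (yab t).1 ∧ (yab t).2.1 ≤ pt.1 ∧ pt.1 ≤ (yab t).2.2 := by
    intro t ht pt hpt
    rw [hreq t ht] at hpt
    exact ⟨hpt.1, hpt.2.1, hpt.2.2⟩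
  have hfact' : ∀ t, t < kk → ∀ s, (yab t).2.1 ≤ s → s ≤ (yab t).2.2 →
      ((s : ℤ), (yab t).1) ∈ r t := by
    intro t ht s h1 h2
    rw [hreq t ht]
    exact ⟨rfl, h1, h2⟩
  have hcompX : ∀ t, t < kk → r t ⊆ X := fun t ht => rowComp_subset (hcomp t ht)
  -- edge witnesses
  have hwitdef : ∀ t, ∃ zw : Pt × Pt, t < kk →
      zw.1 ∈ r t ∧ zw.2 ∈ r (nxt t) ∧ cAdj i zw.1 zw.2 := by
    intro t
    by_cases ht : t < kk
    · obtain ⟨z, hz, w, hw, hzw⟩ := (hedge' t ht).2.2.2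
      exact ⟨(z, w), fun _ => ⟨hz, hw, hzw⟩⟩
    · exact ⟨((0,0),(0,0)), fun h => absurd h ht⟩
  choose zw hzw using hwitdef
  have hzaR : ∀ t, t < kk → (zw t).1 ∈ r t := fun t ht => (hzw t ht).1
  have hwbR : ∀ t, t < kk → (zw t).2 ∈ r (nxt t) := fun t ht => (hzw t ht).2.1
  have hzwadj : ∀ t, t < kk → cAdj i (zw t).1 (zw t).2 := fun t ht => (hzw t ht).2.2
  -- rows of consecutive components differ by one
  have hrowne : ∀ t, t < kk → (yab t).1 ≠ (yab (nxt t)).1 := by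
    intro t ht heq
    apply (hedge' t ht).2.2.1
    have hz := hzaR t ht
    have hw := hwbR t ht
    have hzX : (zw t).1 ∈ X := hcompX t ht hz
    have hwX : (zw t).2 ∈ X := hcompX _ (hnxtlt t ht) hw
    have hrowz : (zw t).1.2 = (yab t).1 := (hfact t ht _ hz).1
    have hroww : (zw t).2.2 = (yab (nxt t)).1 := (hfact _ (hnxtlt t ht) _ hw).1
    have hmm : (zw t).2 ∈ rowCompOf i X (zw t).1 :=
      chainIn_step (mem_rowOf.mpr ⟨hzX, rfl⟩) (mem_rowOf.mpr ⟨hwX, by omega⟩) (hzwadj t ht)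
    calc r t = rowCompOf i X (zw t).1 := rowComp_eq_rowCompOf (hcomp t ht) hz
    _ = rowCompOf i X (zw t).2 := rowComp_eq_rowCompOf (isRowComp_rowCompOf hzX) hmm
    _ = r (nxt t) := (rowComp_eq_rowCompOf (hcomp _ (hnxtlt t ht)) hw).symm
  have hrows : ∀ t, t < kk →
      (yab (nxt t)).1 = (yab t).1 + 1 ∨ (yab (nxt t)).1 = (yab t).1 - 1 := by
    intro t ht
    have hz := hzaR t ht
    have hw := hwbR t ht
    have hrowz : (zw t).1.2 = (yab t).1 := (hfact t ht _ hz).1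
    have hroww : (zw t).2.2 = (yab (nxt t)).1 := (hfact _ (hnxtlt t ht) _ hw).1
    have hd := (cAdj_dinf (hzwadj t ht)).2
    rw [abs_le] at hd
    have := hrowne t ht
    omega
  -- the top component
  obtain ⟨m, hmr, hmax⟩ := Finset.exists_max_image (Finset.range kk)
    (fun t => (yab t).1) ⟨0, by simp; omega⟩
  rw [Finset.mem_range] at hmr
  have hmax' : ∀ t, t < kk → (yab t).1 ≤ (yab m).1 := by
    intro t ht; exact hmax t (Finset.mem_range.mpr ht)
  set Y := (yab m).1 with hY
  -- predecessor of m in the cycle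
  have hpmdef : ∃ pm : ℕ, pm = if m = 0 then kk - 1 else m - 1 := ⟨_, rfl⟩
  obtain ⟨pm, hpmeq⟩ := hpmdef
  have hpmlt : pm < kk := by rw [hpmeq]; split <;> omega
  have hnxtpm : nxt pm = m := by
    rw [hnxt, hpmeq]
    by_cases h0 : m = 0
    · rw [if_pos h0, if_neg (by omega), h0]
    · rw [if_neg h0, if_pos (by omega)]
      omega
  have hpmne : pm ≠ m := by rw [hpmeq]; split <;> omega
  have hnxt_eq_m : ∀ t, t < kk → nxt t = m → t = pm := by
    intro t ht hnm
    rw [hnxt] at hnm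
    rw [hpmeq]
    by_cases h : t + 1 < kk
    · rw [if_pos h] at hnm
      split <;> omega
    · rw [if_neg h] at hnm
      split <;> omega
  set p2 := nxt m with hp2def
  have hp2lt : p2 < kk := hnxtlt m hmr
  have hp2ne : p2 ≠ m := by
    intro h
    have := hrowne m hmr
    rw [hp2def] at h
    rw [h] at this
    exact this rfl
  have hpmp2 : pm ≠ p2 := by
    rw [hpmeq, hp2def, hnxt]
    by_cases h0 : m = 0
    · rw [if_pos h0, h0]
      split <;> omega
    · rw [if_neg h0]
      split <;> omega
  -- rows of the neighbours
  have hrowpm : (yab pm).1 = Y - 1 := by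
    have h1 := hrows pm hpmlt
    rw [hnxtpm] at h1
    have h2 := hmax' pm hpmlt
    omega
  have hrowp2 : (yab p2).1 = Y - 1 := by
    have h1 := hrows m hmr
    rw [← hp2def] at h1
    have h2 := hmax' p2 hp2lt
    omega
  have hrpm_ne_rp2 : r pm ≠ r p2 := by
    intro h
    exact hpmp2 (hinj pm hpmlt p2 hp2lt h)
  -- the two lower components are separated
  have hdisj : (yab pm).2.2 < (yab p2).2.1 ∨ (yab p2).2.2 < (yab pm).2.1 := by
    by_contra hcon
    push_neg at hcon
    obtain ⟨h1, h2⟩ := hcon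
    set s := max (yab pm).2.1 (yab p2).2.1 with hs
    have hs1 : ((s : ℤ), (yab pm).1) ∈ r pm :=
      hfact' pm hpmlt s (le_max_left _ _) (max_le (hAB pm hpmlt) h1)
    have hs2 : ((s : ℤ), (yab p2).1) ∈ r p2 :=
      hfact' p2 hp2lt s (le_max_right _ _) (max_le h2 (hAB p2 hp2lt))
    have hrr : ((s : ℤ), (yab pm).1) = ((s : ℤ), (yab p2).1) := by
      rw [hrowpm, hrowp2]
    rw [hrr] at hs1
    exact hrpm_ne_rp2 (rowComp_disj (hcomp pm hpmlt) (hcomp p2 hp2lt) hs1 hs2)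
  -- the separating column f
  have hfdef : ∃ f : ℤ, ((yab pm).2.2 = f ∧ f + 2 ≤ (yab p2).2.1) ∨
      ((yab p2).2.2 = f ∧ f + 2 ≤ (yab pm).2.1) := by
    rcases hdisj with h | h
    · refine ⟨(yab pm).2.2, Or.inl ⟨rfl, ?_⟩⟩
      by_contra hcon
      have he : (yab p2).2.1 = (yab pm).2.2 + 1 := by omega
      have := hmemX p2 hp2lt (yab p2).2.1 le_rfl (hAB p2 hp2lt)
      rw [he, hrowp2, ← hrowpm] at this
      exact hRR pm hpmlt this
    · refine ⟨(yab p2).2.2, Or.inr ⟨rfl, ?_⟩⟩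
      by_contra hcon
      have he : (yab pm).2.1 = (yab p2).2.2 + 1 := by omega
      have := hmemX pm hpmlt (yab pm).2.1 le_rfl (hAB pm hpmlt)
      rw [he, hrowpm, ← hrowp2] at this
      exact hRR p2 hp2lt this
  obtain ⟨f, hcase⟩ := hfdef
  -- the gap point
  have hgX : ((f : ℤ) + 1, Y - 1) ∉ X := by
    rcases hcase with ⟨h1, h2⟩ | ⟨h1, h2⟩
    · have := hRR pm hpmlt
      rwa [h1, hrowpm] at this
    · have := hRR p2 hp2lt
      rwa [h1, hrowp2] at this
  -- (f+1, Y) belongs to the top component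
  have hfm : (yab m).2.1 ≤ f + 1 ∧ f + 1 ≤ (yab m).2.2 := by
    have hzpm := hfact pm hpmlt _ (hzaR pm hpmlt)
    have hwpm := hfact m (by rw [← hnxtpm]; exact hnxtlt pm hpmlt) _
      (by rw [← hnxtpm]; exact hwbR pm hpmlt)
    have hzm := hfact m hmr _ (hzaR m hmr)
    have hwm := hfact p2 hp2lt _ (by rw [hp2def] at *; exact hwbR m hmr)
    have hd1 := (cAdj_dinf (hzwadj pm hpmlt)).1
    have hd2 := (cAdj_dinf (hzwadj m hmr)).1
    rw [abs_le] at hd1 hd2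
    rcases hcase with ⟨h1, h2⟩ | ⟨h1, h2⟩ <;> omega
  have hfmpt : ((f : ℤ) + 1, Y) ∈ r m := by
    have := hfact' m hmr (f+1) hfm.1 hfm.2
    rwa [← hY] at this
  -- ===== the walk and its step sums =====
  have hx1d : ∀ t : ℕ, ∃ x : ℤ, x = (zw t).2.1 := fun t => ⟨_, rfl⟩
  choose x1 hx1 using hx1d
  have hx2d : ∀ t : ℕ, ∃ x : ℤ, x = (zw (nxt t)).1.1 := fun t => ⟨_, rfl⟩
  choose x2 hx2 using hx2d
  have hrwd : ∀ t : ℕ, ∃ x : ℤ, x = (yab (nxt t)).1 := fun t => ⟨_, rfl⟩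
  choose rw0 hrw0 using hrwd
  have hsgd : ∀ t : ℕ, ∃ x : ℤ, x = if x1 t ≤ x2 t then 1 else -1 := fun t => ⟨_, rfl⟩
  choose sg hsg using hsgd
  have hnsd : ∀ t : ℕ, ∃ x : ℕ, x = (x2 t - x1 t).natAbs := fun t => ⟨_, rfl⟩
  choose ns hns using hnsd
  have hwfd : ∀ (t s : ℕ), ∃ u : Pt, u = (x1 t + s * sg t, rw0 t) := fun t s => ⟨_, rfl⟩
  choose wf hwf using hwfd
  have hsgpm : ∀ t, sg t = 1 ∨ sg t = -1 := by
    intro t; rw [hsg]; split <;> simp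
  have hwf1 : ∀ t s, (wf t s).1 = x1 t + s * sg t := by intro t s; rw [hwf]
  have hwf2 : ∀ t s, (wf t s).2 = rw0 t := by intro t s; rw [hwf]
  have hwf0 : ∀ t, t < kk → wf t 0 = (zw t).2 := by
    intro t ht
    have h2 : (zw t).2.2 = (yab (nxt t)).1 := (hfact _ (hnxtlt t ht) _ (hwbR t ht)).1
    rw [hwf]
    refine (Prod.ext ?_ ?_).symm
    · rw [hx1]; push_cast; ring
    · rw [hrw0]; exact h2
  have hwfn : ∀ t, t < kk → wf t (ns t) = (zw (nxt t)).1 := by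
    intro t ht
    have h2 : (zw (nxt t)).1.2 = (yab (nxt t)).1 := (hfact _ (hnxtlt t ht) _ (hzaR _ (hnxtlt t ht))).1
    rw [hwf]
    refine (Prod.ext ?_ ?_).symm
    · have e1 := hx1 t
      have e2 := hx2 t
      have e3 := hns t
      rw [hsg t]
      split
      · rw [mul_one]; omega
      · rw [mul_neg_one]; omega
    · rw [hrw0]; exact h2
  have hwfmem : ∀ t, t < kk → ∀ s, s ≤ ns t → wf t s ∈ r (nxt t) := by
    intro t ht s hs
    have hb1 := hfact _ (hnxtlt t ht) _ (hwbR t ht)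
    have hb2 := hfact _ (hnxtlt t ht) _ (hzaR _ (hnxtlt t ht))
    have e1 := hx1 t
    have e2 := hx2 t
    have e3 := hns t
    rw [hreq _ (hnxtlt t ht), hwf]
    refine ⟨hrw0 t, ?_, ?_⟩
    · show (yab (nxt t)).2.1 ≤ x1 t + (s : ℤ) * sg t
      rw [hsg t]
      split
      · rw [mul_one]; omega
      · rw [mul_neg_one]; omega
    · show x1 t + (s : ℤ) * sg t ≤ (yab (nxt t)).2.2
      rw [hsg t]
      split
      · rw [mul_one]; omega
      · rw [mul_neg_one]; omega
  have hwfX : ∀ t, t < kk → ∀ s, s ≤ ns t → wf t s ∈ X := by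
    intro t ht s hs
    exact hcompX _ (hnxtlt t ht) (hwfmem t ht s hs)
  -- admissible steps
  have hOKd : ∃ OK : Pt → Pt → Prop, OK = fun u v => u ∈ X ∧ v ∈ X ∧ |u.1 - v.1| ≤ 1 ∧
      |u.2 - v.2| ≤ 1 ∧ (i = 1 → u.1 = v.1 ∨ u.2 = v.2) := ⟨_, rfl⟩
  obtain ⟨OK, hOKdef⟩ := hOKd
  have hOKtrans : ∀ t, t < kk → OK (zw t).1 (zw t).2 := by
    intro t ht
    have hadj := hzwadj t ht
    have hd := cAdj_dinf hadj
    rw [hOKdef]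
    refine ⟨hcompX t ht (hzaR t ht), hcompX _ (hnxtlt t ht) (hwbR t ht), hd.1, hd.2, ?_⟩
    intro hi1
    rw [hi1] at hadj
    rcases cAdj_one_coord hadj with ⟨h, _⟩ | ⟨h, _⟩
    · exact Or.inr h
    · exact Or.inl h
  have hOKwalk : ∀ t, t < kk → ∀ s, s < ns t → OK (wf t s) (wf t (s + 1)) := by
    intro t ht s hs
    rw [hOKdef]
    refine ⟨hwfX t ht s (by omega), hwfX t ht (s+1) (by omega), ?_, ?_, fun _ => Or.inr ?_⟩
    · rw [hwf1, hwf1]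
      have e : x1 t + (s : ℤ) * sg t - (x1 t + ((s + 1 : ℕ) : ℤ) * sg t) = -sg t := by
        push_cast; ring
      rw [e, abs_neg]
      rcases hsgpm t with h | h <;> rw [h] <;> simp
    · rw [hwf2, hwf2]; simp
    · rw [hwf2, hwf2]
  -- the total crossing sum along the cycle
  have hSSd : ∃ SS : (Pt → Pt → ZMod 2) → ZMod 2, SS = fun c =>
      ∑ t ∈ Finset.range kk, (c (zw t).1 (zw t).2 +
        ∑ s ∈ Finset.range (ns t), c (wf t s) (wf t (s + 1))) := ⟨_, rfl⟩
  obtain ⟨SS, hSSdef⟩ := hSSd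
  have hSSeq : ∀ c d : Pt → Pt → ZMod 2, (∀ u v, OK u v → c u v = d u v) → SS c = SS d := by
    intro c d h
    rw [hSSdef]
    refine Finset.sum_congr rfl ?_
    intro t ht
    rw [Finset.mem_range] at ht
    rw [h _ _ (hOKtrans t ht)]
    congr 1
    refine Finset.sum_congr rfl ?_
    intro s hs
    rw [Finset.mem_range] at hs
    rw [h _ _ (hOKwalk t ht s hs)]
  have hSSadd : ∀ c d : Pt → Pt → ZMod 2,
      SS (fun u v => c u v + d u v) = SS c + SS d := by
    intro c d
    rw [hSSdef]
    dsimp only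
    rw [← Finset.sum_add_distrib]
    refine Finset.sum_congr rfl ?_
    intro t _
    rw [Finset.sum_add_distrib]
    ring
  have hSS0 : SS (fun _ _ => (0 : ZMod 2)) = 0 := by
    rw [hSSdef]; simp
  have hSStele : ∀ gg : Pt → ZMod 2, SS (fun u v => gg u + gg v) = 0 := by
    intro gg
    rw [hSSdef]
    dsimp only
    have hterm : ∀ t ∈ Finset.range kk,
        (gg (zw t).1 + gg (zw t).2 +
          ∑ s ∈ Finset.range (ns t), (gg (wf t s) + gg (wf t (s + 1))))
        = gg (zw t).1 + gg (zw (nxt t)).1 := by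
      intro t ht
      rw [Finset.mem_range] at ht
      rw [tele2 (fun s => gg (wf t s)) (ns t), hwf0 t ht, hwfn t ht]
      exact z2_cancel _ _ _
    rw [Finset.sum_congr rfl hterm, Finset.sum_add_distrib]
    have hbij : (∑ t ∈ Finset.range kk, gg (zw (nxt t)).1)
        = ∑ t ∈ Finset.range kk, gg (zw t).1 := by
      refine Finset.sum_nbij' (i := fun t => nxt t)
        (j := fun t => if t = 0 then kk - 1 else t - 1) ?_ ?_ ?_ ?_ ?_
      · intro a ha
        rw [Finset.mem_range] at ha ⊢
        exact hnxtlt a ha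
      · intro a ha
        rw [Finset.mem_range] at ha ⊢
        split <;> omega
      · intro a ha
        rw [Finset.mem_range] at ha
        rw [hnxt]
        split
        · rw [if_neg (by omega)]; omega
        · rw [if_pos rfl]; omega
      · intro a ha
        rw [Finset.mem_range] at ha
        by_cases h0 : a = 0
        · rw [if_pos h0, hnxt, if_neg (by omega), h0]
        · rw [if_neg h0, hnxt, if_pos (by omega)]
          omega
      · intro a _; rfl
    rw [hbij]
    exact z2_add_self _
  -- invariance of the crossing parity in the complement
  have hne4 : ∀ u : Pt, u ∈ X → ∀ w : Pt, w ∉ X → ¬(u.1 = w.1 ∧ u.2 = w.2) := by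
    intro u hu w hw hcon
    apply hw
    rw [show w = u from (Prod.ext hcon.1 hcon.2).symm]
    exact hu
  have hkey : ∀ p q : Pt, p ∉ X → q ∉ X →
      ((q.1 = p.1 ∧ q.2 = p.2) ∨ (q.1 = p.1 ∧ q.2 = p.2 - 1) ∨ (q.1 = p.1 + 1 ∧ q.2 = p.2) ∨
        (i = 1 ∧ q.1 = p.1 + 1 ∧ q.2 = p.2 + 1) ∨ (i = 1 ∧ q.1 = p.1 + 1 ∧ q.2 = p.2 - 1)) →
      SS (crossC p) = SS (crossC q) := by
    intro p q hp hq hdir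
    apply z2_eq_of_add
    rw [← hSSadd]
    rcases hdir with ⟨h1, h2⟩ | ⟨h1, h2⟩ | ⟨h1, h2⟩ | ⟨hi1, h1, h2⟩ | ⟨hi1, h1, h2⟩
    · rw [hSSeq _ (fun _ _ => (0 : ZMod 2)) ?_]
      · exact hSS0
      · intro u v _
        rw [show q = p from Prod.ext h1 h2]
        exact z2_add_self _
    · rw [hSSeq _ (fun _ _ => (0 : ZMod 2)) ?_]
      · exact hSS0
      · intro u v hOK
        rw [hOKdef] at hOK
        obtain ⟨huX, hvX, hd1, hd2, _⟩ := hOK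
        rw [show q = (p.1, p.2 - 1) from Prod.ext h1 h2,
          ← cross_vert hd1 hd2 (hne4 u huX p hp)
            (fun hc => hne4 u huX q hq ⟨by omega, by omega⟩) (hne4 v hvX p hp)
            (fun hc => hne4 v hvX q hq ⟨by omega, by omega⟩)]
        exact z2_add_self _
    · rw [hSSeq _ (fun u v => rayC p u + rayC p v) ?_]
      · exact hSStele _
      · intro u v hOK
        rw [hOKdef] at hOK
        obtain ⟨huX, hvX, hd1, hd2, _⟩ := hOK
        rw [show q = (p.1 + 1, p.2) from Prod.ext h1 h2]
        exact cross_horiz hd1 hd2 (hne4 u huX p hp)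
          (fun hc => hne4 u huX q hq ⟨by omega, by omega⟩) (hne4 v hvX p hp)
          (fun hc => hne4 v hvX q hq ⟨by omega, by omega⟩)
    · rw [hSSeq _ (fun u v => rayC p u + rayC p v) ?_]
      · exact hSStele _
      · intro u v hOK
        rw [hOKdef] at hOK
        obtain ⟨huX, hvX, hd1, hd2, hax⟩ := hOK
        rw [show q = (p.1 + 1, p.2 + 1) from Prod.ext h1 h2]
        exact cross_diag_up hd1 hd2 (hax hi1) (hne4 u huX p hp)
          (fun hc => hne4 u huX q hq ⟨by omega, by omega⟩) (hne4 v hvX p hp)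
          (fun hc => hne4 v hvX q hq ⟨by omega, by omega⟩)
    · rw [hSSeq _ (fun u v => rayC p u + rayC p v) ?_]
      · exact hSStele _
      · intro u v hOK
        rw [hOKdef] at hOK
        obtain ⟨huX, hvX, hd1, hd2, hax⟩ := hOK
        rw [show q = (p.1 + 1, p.2 - 1) from Prod.ext h1 h2]
        exact cross_diag_down hd1 hd2 (hax hi1) (hne4 u huX p hp)
          (fun hc => hne4 u huX q hq ⟨by omega, by omega⟩) (hne4 v hvX p hp)
          (fun hc => hne4 v hvX q hq ⟨by omega, by omega⟩)
  have hstepSS : ∀ p q : Pt, p ∉ X → q ∉ X → cAdj j p q →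
      SS (crossC p) = SS (crossC q) := by
    intro p q hp hq hadj
    have hd := cAdj_dinf hadj
    obtain ⟨hd1, hd2⟩ := hd
    rw [abs_le] at hd1 hd2
    have hj12 : (j = 1 ∧ i = 2) ∨ (j = 2 ∧ i = 1) := by
      rcases hij with ⟨h1, h2⟩ | ⟨h1, h2⟩
      · exact Or.inr ⟨h2, h1⟩
      · exact Or.inl ⟨h2, h1⟩
    have hsum1 : j = 1 → |p.1 - q.1| + |p.2 - q.2| ≤ 1 := by
      intro h; rw [h] at hadj; exact cAdj_one hadj
    have hi1of : j = 2 → i = 1 := by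
      intro h; rcases hj12 with ⟨h1, _⟩ | ⟨_, h2⟩ <;> omega
    rcases (by omega : q.1 = p.1 + 1 ∨ q.1 = p.1 ∨ p.1 = q.1 + 1) with hx | hx | hx <;>
      rcases (by omega : q.2 = p.2 + 1 ∨ q.2 = p.2 ∨ p.2 = q.2 + 1) with hy | hy | hy
    · -- (+1, +1)
      have hj2 : j = 2 := by
        rcases hj12 with ⟨h1, _⟩ | ⟨h1, _⟩
        · exfalso
          have := hsum1 h1
          rcases abs_cases (p.1 - q.1) with ⟨e1, _⟩ | ⟨e1, _⟩ <;>
            rcases abs_cases (p.2 - q.2) with ⟨e2, _⟩ | ⟨e2, _⟩ <;> omega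
        · exact h1
      exact hkey p q hp hq (Or.inr (Or.inr (Or.inr (Or.inl ⟨hi1of hj2, hx, hy⟩))))
    · exact hkey p q hp hq (Or.inr (Or.inr (Or.inl ⟨hx, hy⟩)))
    · -- (+1, -1)
      have hj2 : j = 2 := by
        rcases hj12 with ⟨h1, _⟩ | ⟨h1, _⟩
        · exfalso
          have := hsum1 h1
          rcases abs_cases (p.1 - q.1) with ⟨e1, _⟩ | ⟨e1, _⟩ <;>
            rcases abs_cases (p.2 - q.2) with ⟨e2, _⟩ | ⟨e2, _⟩ <;> omega
        · exact h1
      exact hkey p q hp hq (Or.inr (Or.inr (Or.inr (Or.inr ⟨hi1of hj2, hx, by omega⟩))))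
    · exact (hkey q p hq hp (Or.inr (Or.inl ⟨by omega, by omega⟩))).symm
    · exact hkey p q hp hq (Or.inl ⟨hx, hy⟩)
    · exact hkey p q hp hq (Or.inr (Or.inl ⟨hx, by omega⟩))
    · -- (-1, +1)
      have hj2 : j = 2 := by
        rcases hj12 with ⟨h1, _⟩ | ⟨h1, _⟩
        · exfalso
          have := hsum1 h1
          rcases abs_cases (p.1 - q.1) with ⟨e1, _⟩ | ⟨e1, _⟩ <;>
            rcases abs_cases (p.2 - q.2) with ⟨e2, _⟩ | ⟨e2, _⟩ <;> omega
        · exact h1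
      exact (hkey q p hq hp (Or.inr (Or.inr (Or.inr (Or.inr ⟨hi1of hj2, by omega, by omega⟩))))).symm
    · exact (hkey q p hq hp (Or.inr (Or.inr (Or.inl ⟨by omega, by omega⟩)))).symm
    · -- (-1, -1)
      have hj2 : j = 2 := by
        rcases hj12 with ⟨h1, _⟩ | ⟨h1, _⟩
        · exfalso
          have := hsum1 h1
          rcases abs_cases (p.1 - q.1) with ⟨e1, _⟩ | ⟨e1, _⟩ <;>
            rcases abs_cases (p.2 - q.2) with ⟨e2, _⟩ | ⟨e2, _⟩ <;> omega
        · exact h1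
      exact (hkey q p hq hp (Or.inr (Or.inr (Or.inr (Or.inl ⟨hi1of hj2, by omega, by omega⟩))))).symm
  have hchainSS : ∀ p q' : Pt, ChainIn j Xᶜ p q' → SS (crossC p) = SS (crossC q') := by
    intro p q' hch
    obtain ⟨nn, c, h0, hn, hmemc, hadjc⟩ := hch
    have hh : ∀ s, s ≤ nn → SS (crossC (c 0)) = SS (crossC (c s)) := by
      intro s
      induction s with
      | zero => intro _; rfl
      | succ s ih =>
        intro hs
        rw [ih (by omega)]
        exact hstepSS _ _ (hmemc s (by omega)) (hmemc (s + 1) (by omega)) (hadjc s (by omega))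
    rw [← h0, ← hn]
    exact hh nn le_rfl
  -- far away the parity vanishes
  obtain ⟨M, hM⟩ := exists_bound hX
  have hfarX : (((M : ℤ) + 2, 0) : Pt) ∉ X := by
    intro h
    have := (hM _ h).1
    dsimp only at this
    omega
  have hfar0 : SS (crossC ((M : ℤ) + 2, 0)) = 0 := by
    rw [hSSeq _ (fun _ _ => (0 : ZMod 2)) ?_]
    · exact hSS0
    · intro u v hOK
      rw [hOKdef] at hOK
      obtain ⟨huX, hvX, _, _, _⟩ := hOK
      have h1 := (hM _ huX).1
      have h2 := (hM _ hvX).1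
      rw [crossC, if_neg]
      dsimp only
      omega
  -- the gap point has parity 1
  have hgc0 : SS (crossC ((f : ℤ) + 1, Y - 1)) = 0 := by
    rw [hchainSS _ _ (hXc _ hgX _ hfarX)]
    exact hfar0
  -- compute the parity at the gap point
  have hsplit : SS (crossC ((f : ℤ) + 1, Y - 1))
      = SS (fun u v => sideC f u + sideC f v) + SS (crossH f Y) := by
    rw [← hSSadd]
    refine hSSeq _ _ ?_
    intro u v hOK
    rw [hOKdef] at hOK
    obtain ⟨_, _, hd1, _, _⟩ := hOK
    exact z2_move _ _ _ (cross_partition u v hd1)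
  -- evaluate SS (crossH f Y)
  have hrowY : ∀ t, t < kk → (yab t).1 ≤ Y := hmax'
  have hcolm : ∀ pt : Pt, pt ∈ X → pt.2 = Y → pt.1 = f + 1 → ∀ t, t < kk → pt ∈ r t → t = m := by
    intro pt hpt h2 h1 t ht hmem
    have hpt' : pt = ((f : ℤ) + 1, Y) := Prod.ext h1 h2
    rw [hpt'] at hmem
    exact hinj t ht m hmr (rowComp_disj (hcomp t ht) (hcomp m hmr) hmem hfmpt)
  have hHval : SS (crossH f Y) = 1 := by
    rw [hSSdef]
    dsimp only
    have hsub : ({pm, m} : Finset ℕ) ⊆ Finset.range kk := by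
      intro x hx
      simp only [Finset.mem_insert, Finset.mem_singleton] at hx
      rcases hx with h | h <;> rw [h] <;> rw [Finset.mem_range] <;> [exact hpmlt; exact hmr]
    have hvanish : ∀ t ∈ Finset.range kk, t ∉ ({pm, m} : Finset ℕ) →
        (crossH f Y (zw t).1 (zw t).2 +
          ∑ s ∈ Finset.range (ns t), crossH f Y (wf t s) (wf t (s + 1))) = 0 := by
      intro t htr htn
      rw [Finset.mem_range] at htr
      simp only [Finset.mem_insert, Finset.mem_singleton] at htn
      push_neg at htn
      obtain ⟨htpm, htm⟩ := htn
      have hza := hfact t htr _ (hzaR t htr)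
      have hwb := hfact _ (hnxtlt t htr) _ (hwbR t htr)
      have hyt := hrowY t htr
      have hynt := hrowY _ (hnxtlt t htr)
      have hyne := hrowne t htr
      have htrans : crossH f Y (zw t).1 (zw t).2 = 0 := by
        rw [crossH, if_neg]
        rintro ⟨hcols, hht⟩
        rcases (by omega : (yab t).1 = Y ∧ (yab (nxt t)).1 = Y - 1 ∨
            (yab t).1 = Y - 1 ∧ (yab (nxt t)).1 = Y) with ⟨e1, e2⟩ | ⟨e1, e2⟩
        · rcases hcols with ⟨c1, c2⟩ | ⟨c1, c2⟩
          · -- za at col f, wb = gap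
            apply hgX
            have : (zw t).2 = ((f : ℤ) + 1, Y - 1) := Prod.ext c2 (by omega)
            rw [← this]
            exact hcompX _ (hnxtlt t htr) (hwbR t htr)
          · exact htm (hcolm (zw t).1 (hcompX t htr (hzaR t htr)) (by omega) c1 t htr (hzaR t htr))
        · rcases hcols with ⟨c1, c2⟩ | ⟨c1, c2⟩
          · exact htpm (hnxt_eq_m _ htr (hcolm (zw t).2 (hcompX _ (hnxtlt t htr) (hwbR t htr))
              (by omega) c2 _ (hnxtlt t htr) (hwbR t htr)))
          · apply hgX
            have : (zw t).1 = ((f : ℤ) + 1, Y - 1) := Prod.ext c1 (by omega)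
            rw [← this]
            exact hcompX t htr (hzaR t htr)
      have hwalk : ∀ s ∈ Finset.range (ns t), crossH f Y (wf t s) (wf t (s + 1)) = 0 := by
        intro s hs
        rw [Finset.mem_range] at hs
        rw [crossH, if_neg]
        rintro ⟨hcols, hht⟩
        rw [hwf2, hwf2, hrw0] at hht
        have hrY : (yab (nxt t)).1 = Y := by omega
        have hin : wf t (s + 1) ∈ r (nxt t) := hwfmem t htr (s + 1) (by omega)
        have hin0 : wf t s ∈ r (nxt t) := hwfmem t htr s (by omega)
        rcases hcols with ⟨c1, c2⟩ | ⟨c1, c2⟩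
        · exact htpm (hnxt_eq_m _ htr (hcolm _ (hwfX t htr (s+1) (by omega))
            (by rw [hwf2, hrw0]; omega) c2 _ (hnxtlt t htr) hin))
        · exact htpm (hnxt_eq_m _ htr (hcolm _ (hwfX t htr s (by omega))
            (by rw [hwf2, hrw0]; omega) c1 _ (hnxtlt t htr) hin0))
      rw [htrans, Finset.sum_congr rfl hwalk, Finset.sum_const_zero, add_zero]
    rw [← Finset.sum_subset hsub hvanish, Finset.sum_pair hpmne]
    -- the walk inside the top component
    have hwalkpm : (∑ s ∈ Finset.range (ns pm), crossH f Y (wf pm s) (wf pm (s + 1)))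
        = sideC f (zw pm).2 + sideC f (zw m).1 := by
      have hrY : rw0 pm = Y := by rw [hrw0, hnxtpm]
      have hpt : ∀ s ∈ Finset.range (ns pm), crossH f Y (wf pm s) (wf pm (s + 1))
          = sideC f (wf pm s) + sideC f (wf pm (s + 1)) := by
        intro s hs
        rw [Finset.mem_range] at hs
        refine crossH_row (by rw [hwf2, hrY]) (by rw [hwf2, hrY]) ?_
        rw [hwf1, hwf1]
        have e : x1 pm + (s : ℤ) * sg pm - (x1 pm + ((s + 1 : ℕ) : ℤ) * sg pm) = -sg pm := by
          push_cast; ring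
        rw [e, abs_neg]
        rcases hsgpm pm with h | h <;> rw [h] <;> simp
      rw [Finset.sum_congr rfl hpt, tele2 (fun s => sideC f (wf pm s)) (ns pm),
        hwf0 pm hpmlt, hwfn pm hpmlt, hnxtpm]
    -- the walk after the top component lies in a lower row
    have hwalkm : (∑ s ∈ Finset.range (ns m), crossH f Y (wf m s) (wf m (s + 1))) = 0 := by
      refine Finset.sum_eq_zero ?_
      intro s hs
      rw [crossH, if_neg]
      rintro ⟨-, hht⟩
      rw [hwf2, hwf2, hrw0, ← hp2def] at hht
      omega
    rw [hwalkpm, hwalkm, add_zero]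
    -- final evaluation
    have hzapm := hfact pm hpmlt _ (hzaR pm hpmlt)
    have hwbpm := hfact _ (hnxtlt pm hpmlt) _ (hwbR pm hpmlt)
    rw [hnxtpm] at hwbpm
    have hzam := hfact m hmr _ (hzaR m hmr)
    have hwbm := hfact _ (hnxtlt m hmr) _ (hwbR m hmr)
    rw [← hp2def] at hwbm
    have hd1 := (cAdj_dinf (hzwadj pm hpmlt)).1
    have hd2 := (cAdj_dinf (hzwadj m hmr)).1
    rw [abs_le] at hd1 hd2
    rw [crossH, crossH, sideC, sideC]
    rcases hcase with ⟨h1, h2⟩ | ⟨h1, h2⟩ <;>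
      split_ifs <;> first | decide | (exfalso; omega)
  rw [hsplit, hSStele, hHval] at hgc0
  rw [zero_add] at hgc0
  exact absurd hgc0 (by decide)

lemma abs_pm {e : ℤ} (h : e = 1 ∨ e = -1) : |e| = 1 := by
  rcases h with h | h <;> simp [h]

lemma cAdj_vshift {i : ℕ} {x y ε : ℤ} (h : ε = 1 ∨ ε = -1) : cAdj i (x, y) (x, y + ε) := by
  refine cAdj_vert ?_ rfl
  dsimp only
  have e : y - (y + ε) = -ε := by ring
  rw [e, abs_neg, abs_pm h]

lemma abs_down {k ε : ℤ} (h : ε = 1 ∨ ε = -1) : |k - (k + ε)| ≤ 1 := by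
  rw [show k - (k + ε) = -ε by ring, abs_neg, abs_pm h]
  
lemma cAdj_two {x y : Pt} (h1 : |x.1 - y.1| ≤ 1) (h2 : |x.2 - y.2| ≤ 1) : cAdj 2 x y := by
  unfold cAdj
  norm_num
  exact ⟨h1, h2⟩

-- §8 main induction
lemma main_ind (i j : ℕ) (hij : (i = 1 ∧ j = 2) ∨ (i = 2 ∧ j = 1)) :
    ∀ n : ℕ, ∀ X : Set Pt, X.Finite → X.ncard ≤ n → X.Nonempty → Conn i X → Conn j Xᶜ →
      Contractible i (subAdj i X) := by
  intro n
  induction n with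
  | zero =>
    intro X hX hcard hne _ _
    exfalso
    have := (Set.ncard_pos hX).mpr hne
    omega
  | succ n IH =>
    intro X hX hcard hne hconn hXc
    have hpos : 1 ≤ X.ncard := (Set.ncard_pos hX).mpr hne
    -- single-point removal wrapper
    have step : ∀ p q' : Pt, p ∈ X → q' ∈ X → q' ≠ p → cAdj i p q' →
        (∀ z ∈ X, z ≠ p → cAdj i z p → cAdj i z q') → (∃ w, w ∉ X ∧ cAdj j p w) →
        Contractible i (subAdj i X) := by
      intro p q' hp hq hne' hpq hsimp hw
      obtain ⟨hc1, hc2, hc3⟩ := simple_point_removal hp hq hne' hpq hsimp hconn hXc hw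
      apply hc3
      apply IH (X \ {p}) (hX.diff) ?_ ⟨q', hq, hne'⟩ hc1 hc2
      have := Set.ncard_diff_singleton_of_mem hp
      omega
    -- whole-segment removal wrapper (only for i = 1)
    have stepT : i = 1 → ∀ k a b ε : ℤ, (ε = 1 ∨ ε = -1) → a ≤ b →
        (∀ t, a ≤ t → t ≤ b → (t, k) ∈ X) →
        (∀ t, a ≤ t → t ≤ b → (t, k + ε) ∈ X) →
        (a - 1, k) ∉ X → (b + 1, k) ∉ X →
        (∀ t, a ≤ t → t ≤ b → (t, k - ε) ∉ X) →
        Contractible i (subAdj i X) := by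
      intro hi1 k a b ε hε hab hT hB hL hR hO
      subst hi1
      have hj2 : j = 2 := by omega
      obtain ⟨hc1, hc2, hc3⟩ := pushdown_removal (j := j) hε hT hB hL hR hO hconn hXc
      apply hc3
      have hlt : (X \ rowSeg k a b).ncard < X.ncard := by
        apply Set.ncard_lt_ncard _ hX
        constructor
        · exact Set.diff_subset
        · intro hsub
          have := hsub (hT a le_rfl hab)
          exact this.2 ⟨rfl, le_rfl, hab⟩
      apply IH _ (hX.diff) (by omega) ?_ hc1 hc2
      exact ⟨(a, k + ε), hB a le_rfl hab, fun hcon => by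
        have : k + ε = k := hcon.1
        omega⟩
    obtain ⟨x₀, hx₀⟩ := hne
    by_cases hdis : ∃ r s : Set Pt, IsRowComp i X r ∧ IsRowComp i X s ∧ r ≠ s
    · -- at least two row components: find a leaf and remove it
      obtain ⟨r0, s0, hr0, hs0, hne0⟩ := hdis
      obtain ⟨T, N, hT, hTN, huniq⟩ :=
        exists_leaf hX hconn (acyclic_of_compl_conn hij hX hXc) hr0 hs0 hne0
      obtain ⟨k, a, b, hab, hTeq, hTmem, hTL, hTR⟩ := isRowComp_struct hX hT
      obtain ⟨k', e, f, hef, hNeq, hNmem, hNL, hNR⟩ := isRowComp_struct hX hTN.2.1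
      -- the two rows are vertically adjacent
      obtain ⟨z0, hz0T, w0, hw0N, hzw0⟩ := hTN.2.2.2
      have hz0row : z0.2 = k := by rw [hTeq] at hz0T; exact hz0T.1
      have hw0row : w0.2 = k' := by rw [hNeq] at hw0N; exact hw0N.1
      have hz0col : a ≤ z0.1 ∧ z0.1 ≤ b := by rw [hTeq] at hz0T; exact ⟨hz0T.2.1, hz0T.2.2⟩
      have hw0col : e ≤ w0.1 ∧ w0.1 ≤ f := by rw [hNeq] at hw0N; exact ⟨hw0N.2.1, hw0N.2.2⟩
      have hkne : k' ≠ k := by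
        intro hkk
        apply hTN.2.2.1
        have hz0X : z0 ∈ X := rowComp_subset hT hz0T
        have hw0X : w0 ∈ X := rowComp_subset hTN.2.1 hw0N
        have hmem : w0 ∈ rowCompOf i X z0 :=
          chainIn_step (mem_rowOf.mpr ⟨hz0X, rfl⟩)
            (mem_rowOf.mpr ⟨hw0X, by rw [hw0row, hkk, ← hz0row]⟩) hzw0
        calc T = rowCompOf i X z0 := rowComp_eq_rowCompOf hT hz0T
        _ = rowCompOf i X w0 := rowComp_eq_rowCompOf (isRowComp_rowCompOf hz0X) hmem
        _ = N := (rowComp_eq_rowCompOf hTN.2.1 hw0N).symm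
      have hd0 := cAdj_dinf hzw0
      have hkd : k' = k + 1 ∨ k' = k - 1 := by
        have := abs_le.mp hd0.2
        omega
      set ε : ℤ := k' - k with hεdef
      have hε : ε = 1 ∨ ε = -1 := by omega
      have hk' : k' = k + ε := by omega
      -- attachments of T land in N
      have hatt : ∀ w' ∈ X, w' ∉ T → ∀ z' ∈ T, cAdj i z' w' → w' ∈ N := by
        intro w' hw' hnotT z' hz' hadj
        have hrcg : rcgAdj i X T (rowCompOf i X w') := by
          refine ⟨hT, isRowComp_rowCompOf hw', ?_, z', hz', w', mem_rowCompOf hw', hadj⟩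
          intro hcon
          apply hnotT
          rw [hcon]
          exact mem_rowCompOf hw'
        have := huniq _ hrcg
        rw [← this]
        exact mem_rowCompOf hw'
      have hTX : ∀ t, a ≤ t → t ≤ b → (t, k) ∈ X := hTmem
      have hTseg : ∀ t, a ≤ t → t ≤ b → (t, k) ∈ T := by
        intro t h1 h2; rw [hTeq]; exact ⟨rfl, h1, h2⟩
      -- opposite side of T is empty
      have hop1 : ∀ t, a ≤ t → t ≤ b → (t, k - ε) ∉ X := by
        intro t h1 h2 hmem
        have hno : (t, k - ε) ∉ T := by
          rw [hTeq]; intro hcon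
          have : k - ε = k := hcon.1
          omega
        have hadj : cAdj i ((t : ℤ), k) (t, k - ε) := by
          have e : k - ε = k + (-ε) := by ring
          rw [e]
          exact cAdj_vshift (by omega)
        have := hatt _ hmem hno (t, k) (hTseg t h1 h2) hadj
        rw [hNeq] at this
        have : k - ε = k' := this.1
        omega
      have hNin : ∀ t, e ≤ t → t ≤ f → (t, k + ε) ∈ X := by
        intro t h1 h2
        have := hNmem t h1 h2
        rwa [hk'] at this
      have hNbd : ∀ w' : Pt, w' ∈ N → e ≤ w'.1 ∧ w'.1 ≤ f := by
        intro w' hw'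
        rw [hNeq] at hw'
        exact ⟨hw'.2.1, hw'.2.2⟩
      have hTne : ∀ t : ℤ, (t, k + ε) ∉ T := by
        intro t hmem
        rw [hTeq] at hmem
        have : k + ε = k := hmem.1
        omega
      rcases hij with ⟨hi1, hj2⟩ | ⟨hi2, hj1⟩
      · -- i = 1
        subst hi1; subst hj2
        have hatt1 : ∀ t, a ≤ t → t ≤ b → (t, k + ε) ∈ X → e ≤ t ∧ t ≤ f := by
          intro t h1 h2 hmem
          exact hNbd _ (hatt _ hmem (hTne t) (t, k) (hTseg t h1 h2) (cAdj_vshift hε))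
        by_cases hDa : (a, k + ε) ∈ X
        · by_cases hDb : (b, k + ε) ∈ X
          · -- whole segment pushdown
            have hea := hatt1 a le_rfl hab hDa
            have hfb := hatt1 b hab le_rfl hDb
            exact stepT rfl k a b ε hε hab hTX
              (fun t h1 h2 => hNin t (by omega) (by omega)) hTL hTR hop1
          · -- remove right endpoint
            have hablt : a < b := by
              rcases eq_or_lt_of_le hab with h | h
              · exact absurd (h ▸ hDa) hDb
              · exact h
            apply step (b, k) (b - 1, k) (hTX b hab le_rfl) (hTX (b-1) (by omega) (by omega))
            · intro hcon; have := (Prod.ext_iff.mp hcon).1; dsimp only at this; omega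
            · exact cAdj_horiz (by simp) rfl
            · intro z hz hzne hzadj
              rcases cAdj_one_coord hzadj with ⟨g1, g2⟩ | ⟨g1, g2⟩
              · dsimp only at g1 g2
                have hz1 : z.1 = b - 1 := by
                  rcases g2 with g | g | g
                  · exact absurd (Prod.ext (by omega) g1) hzne
                  · exfalso; apply hTR
                    rw [show ((b:ℤ)+1, k) = z from Prod.ext (by omega) g1.symm]
                    exact hz
                  · omega
                rw [show z = ((b:ℤ)-1, k) from Prod.ext hz1 g1]
                exact cAdj_refl 1 _
              · dsimp only at g1 g2
                exfalso
                have hz2 : z.2 = k + ε ∨ z.2 = k - ε := by omega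
                rcases hz2 with h | h
                · exact hDb (by rw [show ((b:ℤ), k+ε) = z from Prod.ext g1.symm h.symm]; exact hz)
                · exact hop1 b hab le_rfl
                    (by rw [show ((b:ℤ), k-ε) = z from Prod.ext g1.symm h.symm]; exact hz)
            · refine ⟨(b, k - ε), hop1 b hab le_rfl, ?_⟩
              have e2 : k - ε = k + (-ε) := by ring
              rw [e2]
              exact cAdj_vshift (by omega)
        · -- remove left endpoint
          have hablt : a < b := by
            rcases eq_or_lt_of_le hab with h | h
            · exfalso
              apply hDa
              have hz01 : z0.1 = a := by omega
              rcases cAdj_one_coord hzw0 with ⟨g1, g2⟩ | ⟨g1, g2⟩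
              · exfalso; omega
              · have : w0 = ((a:ℤ), k + ε) := Prod.ext (by omega) (by omega)
                rw [← this]
                exact rowComp_subset hTN.2.1 hw0N
            · exact h
          apply step (a, k) (a + 1, k) (hTX a le_rfl hab) (hTX (a+1) (by omega) (by omega))
          · intro hcon; have := (Prod.ext_iff.mp hcon).1; dsimp only at this; omega
          · exact cAdj_horiz (by simp) rfl
          · intro z hz hzne hzadj
            rcases cAdj_one_coord hzadj with ⟨g1, g2⟩ | ⟨g1, g2⟩
            · dsimp only at g1 g2
              have hz1 : z.1 = a + 1 := by
                rcases g2 with g | g | g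
                · exact absurd (Prod.ext (by omega) g1) hzne
                · omega
                · exfalso; apply hTL
                  rw [show ((a:ℤ)-1, k) = z from Prod.ext (by omega) g1.symm]
                  exact hz
              rw [show z = ((a:ℤ)+1, k) from Prod.ext hz1 g1]
              exact cAdj_refl 1 _
            · dsimp only at g1 g2
              exfalso
              have hz2 : z.2 = k + ε ∨ z.2 = k - ε := by omega
              rcases hz2 with h | h
              · exact hDa (by rw [show ((a:ℤ), k+ε) = z from Prod.ext g1.symm h.symm]; exact hz)
              · exact hop1 a le_rfl hab
                  (by rw [show ((a:ℤ), k-ε) = z from Prod.ext g1.symm h.symm]; exact hz)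
          · refine ⟨(a, k - ε), hop1 a le_rfl hab, ?_⟩
            have e2 : k - ε = k + (-ε) := by ring
            rw [e2]
            exact cAdj_vshift (by omega)
      · -- i = 2
        subst hi2; subst hj1
        have hattc : ∀ t, a - 1 ≤ t → t ≤ b + 1 → (t, k + ε) ∈ X → e ≤ t ∧ t ≤ f := by
          intro t h1 h2 hmem
          refine hNbd _ (hatt _ hmem (hTne t) (max a (min t b), k)
            (hTseg _ (by omega) (by omega)) ?_)
          exact cAdj_two (by rw [abs_le]; constructor <;> dsimp only <;> omega)
            (by dsimp only; rw [show k - (k + ε) = -ε by ring, abs_neg, abs_pm hε])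
        have hop2 : ∀ t, a - 1 ≤ t → t ≤ b + 1 → (t, k - ε) ∉ X := by
          intro t h1 h2 hmem
          have hno : (t, k - ε) ∉ T := by
            rw [hTeq]; intro hcon
            have : k - ε = k := hcon.1
            omega
          have hadj : cAdj 2 (max a (min t b), k) (t, k - ε) :=
            cAdj_two (by rw [abs_le]; constructor <;> dsimp only <;> omega)
              (by dsimp only; rw [show k - (k - ε) = ε by ring, abs_pm hε])
          have := hNbd _ (hatt _ hmem hno _ (hTseg _ (by omega) (by omega)) hadj)
          have hrow := (by rw [hNeq] at *; exact (hatt _ hmem hno _ (hTseg (max a (min t b)) (by omega) (by omega)) hadj).1 : k - ε = k')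
          omega
        have hwC : ∀ (c : ℤ), a ≤ c → c ≤ b → ∃ w, w ∉ X ∧ cAdj 1 ((c : ℤ), k) w := by
          intro c h1 h2
          refine ⟨(c, k - ε), hop2 c (by omega) (by omega), ?_⟩
          have e2 : k - ε = k + (-ε) := by ring
          rw [e2]
          exact cAdj_vshift (by omega)
        -- generic neighbour analysis helper
        have hnbr : ∀ z : Pt, z ∈ X → ∀ c : ℤ, a ≤ c → c ≤ b → cAdj 2 z (c, k) →
            (z.2 = k ∧ c - 1 ≤ z.1 ∧ z.1 ≤ c + 1 ∧ a ≤ z.1 ∧ z.1 ≤ b) ∨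
            (z.2 = k + ε ∧ c - 1 ≤ z.1 ∧ z.1 ≤ c + 1) := by
          intro z hz c h1 h2 hzadj
          obtain ⟨d1, d2⟩ := cAdj_dinf hzadj
          rw [abs_le] at d1 d2
          dsimp only at d1 d2
          have hne2 : z.2 ≠ k - ε := by
            intro h
            exact hop2 z.1 (by omega) (by omega)
              (by rw [show (z.1, k - ε) = z from Prod.ext rfl h.symm]; exact hz)
          have : z.2 = k ∨ z.2 = k + ε := by omega
          rcases this with h | h
          · left
            have hla : z.1 ≠ a - 1 := by
              intro hcon
              have hzl : z = ((a:ℤ)-1, k) := Prod.ext hcon h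
              exact hTL (hzl ▸ hz)
            have hlb : z.1 ≠ b + 1 := by
              intro hcon
              have hzr : z = ((b:ℤ)+1, k) := Prod.ext hcon h
              exact hTR (hzr ▸ hz)
            exact ⟨h, by omega, by omega, by omega, by omega⟩
          · right
            exact ⟨h, by omega, by omega⟩
        by_cases hDa : (a, k + ε) ∈ X
        · -- q' directly below/above left endpoint
          apply step (a, k) (a, k + ε) (hTX a le_rfl hab) hDa
          · intro hcon; have := (Prod.ext_iff.mp hcon).2; dsimp only at this; omega
          · exact cAdj_vshift hε
          · intro z hz hzne hzadj
            rcases hnbr z hz a le_rfl hab hzadj with ⟨h1, h2, h3, h4, h5⟩ | ⟨h1, h2, h3⟩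
            · exact cAdj_two (by rw [abs_le]; dsimp only; omega)
                (by dsimp only; rw [h1, show k - (k + ε) = -ε by ring, abs_neg, abs_pm hε])
            · exact cAdj_two (by rw [abs_le]; dsimp only; omega)
                (by dsimp only; rw [h1]; simp)
          · exact hwC a le_rfl hab
        · by_cases hDam : (a - 1, k + ε) ∈ X
          · -- left end is stuck: N lies entirely to the left, use the right end
            have hfa : f = a - 1 := by
              have h1 := hattc (a-1) (by omega) (by omega) hDam
              have h2 : ¬ a ≤ f := fun h => hDa (hNin a (by omega) h)
              omega
            by_cases hab' : a = b
            · -- singleton T, attach on upper-left diagonal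
              apply step (a, k) (a - 1, k + ε) (hTX a le_rfl hab) hDam
              · intro hcon; have := (Prod.ext_iff.mp hcon).2; dsimp only at this; omega
              · exact cAdj_two (by simp) (by dsimp only; exact abs_down hε)
              · intro z hz hzne hzadj
                rcases hnbr z hz a le_rfl hab hzadj with ⟨h1, h2, h3, h4, h5⟩ | ⟨h1, h2, h3⟩
                · exfalso
                  have : z.1 = a := by omega
                  exact hzne (Prod.ext this h1)
                · have hz1 : z.1 = a - 1 := by
                    have hna : z.1 ≠ a := by
                      intro h
                      exact hDa (by rw [show ((a:ℤ), k + ε) = z from Prod.ext h.symm h1.symm]; exact hz)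
                    have hna1 : z.1 ≠ a + 1 := by
                      intro h
                      have := hattc z.1 (by omega) (by omega)
                        (by rw [show (z.1, k + ε) = z from Prod.ext rfl h1.symm]; exact hz)
                      omega
                    omega
                  rw [show z = ((a:ℤ)-1, k+ε) from Prod.ext hz1 h1]
                  exact cAdj_refl 2 _
              · exact hwC a le_rfl hab
            · -- a < b : right end is free
              have hablt : a < b := lt_of_le_of_ne hab hab'
              apply step (b, k) (b - 1, k) (hTX b hab le_rfl) (hTX (b-1) (by omega) (by omega))
              · intro hcon; have := (Prod.ext_iff.mp hcon).1; dsimp only at this; omega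
              · exact cAdj_two (by simp) (by simp)
              · intro z hz hzne hzadj
                rcases hnbr z hz b hab le_rfl hzadj with ⟨h1, h2, h3, h4, h5⟩ | ⟨h1, h2, h3⟩
                · exact cAdj_two (by rw [abs_le]; dsimp only; omega)
                    (by dsimp only; rw [h1]; simp)
                · exfalso
                  have := hattc z.1 (by omega) (by omega)
                    (by rw [show (z.1, k + ε) = z from Prod.ext rfl h1.symm]; exact hz)
                  omega
              · exact hwC b hab le_rfl
          · -- no attachment at or left of the left endpoint
            by_cases hab' : a = b
            · -- singleton T: the attachment must be on the upper-right diagonal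
              have hz0a : z0.1 = a := by
                rw [hTeq] at hz0T
                have := hz0T.2
                omega
              have hw0X : w0 ∈ X := rowComp_subset hTN.2.1 hw0N
              have hw0pt : w0 = ((a:ℤ)+1, k + ε) := by
                have hd0' := hd0
                rw [abs_le] at hd0'
                obtain ⟨e1', e2'⟩ := hd0'
                have hw02 : w0.2 = k + ε := by omega
                have hw01 : w0.1 = a + 1 := by
                  have hna : w0.1 ≠ a := by
                    intro h
                    exact hDa (by rw [show ((a:ℤ), k + ε) = w0 from Prod.ext h.symm hw02.symm]; exact hw0X)
                  have hna1 : w0.1 ≠ a - 1 := by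
                    intro h
                    exact hDam (by rw [show ((a:ℤ)-1, k + ε) = w0 from Prod.ext h.symm hw02.symm]; exact hw0X)
                  omega
                exact Prod.ext hw01 hw02
              apply step (a, k) ((a:ℤ)+1, k + ε) (hTX a le_rfl hab) (hw0pt ▸ hw0X)
              · intro hcon; have := (Prod.ext_iff.mp hcon).2; dsimp only at this; omega
              · exact cAdj_two (by simp) (by dsimp only; exact abs_down hε)
              · intro z hz hzne hzadj
                rcases hnbr z hz a le_rfl hab hzadj with ⟨h1, h2, h3, h4, h5⟩ | ⟨h1, h2, h3⟩
                · exfalso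
                  have : z.1 = a := by omega
                  exact hzne (Prod.ext this h1)
                · have hz1 : z.1 = a + 1 := by
                    have hna : z.1 ≠ a := by
                      intro h
                      exact hDa (by rw [show ((a:ℤ), k + ε) = z from Prod.ext h.symm h1.symm]; exact hz)
                    have hna1 : z.1 ≠ a - 1 := by
                      intro h
                      exact hDam (by rw [show ((a:ℤ)-1, k + ε) = z from Prod.ext h.symm h1.symm]; exact hz)
                    omega
                  rw [show z = ((a:ℤ)+1, k+ε) from Prod.ext hz1 h1]
                  exact cAdj_refl 2 _
              · exact hwC a le_rfl hab
            · -- a < b : remove left endpoint towards the right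
              have hablt : a < b := lt_of_le_of_ne hab hab'
              apply step (a, k) ((a:ℤ)+1, k) (hTX a le_rfl hab) (hTX (a+1) (by omega) (by omega))
              · intro hcon; have := (Prod.ext_iff.mp hcon).1; dsimp only at this; omega
              · exact cAdj_two (by simp) (by simp)
              · intro z hz hzne hzadj
                rcases hnbr z hz a le_rfl hab hzadj with ⟨h1, h2, h3, h4, h5⟩ | ⟨h1, h2, h3⟩
                · exact cAdj_two (by rw [abs_le]; dsimp only; omega)
                    (by dsimp only; rw [h1]; simp)
                · have hz1 : z.1 = a + 1 := by
                    have hna : z.1 ≠ a := by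
                      intro h
                      exact hDa (by rw [show ((a:ℤ), k + ε) = z from Prod.ext h.symm h1.symm]; exact hz)
                    have hna1 : z.1 ≠ a - 1 := by
                      intro h
                      exact hDam (by rw [show ((a:ℤ)-1, k + ε) = z from Prod.ext h.symm h1.symm]; exact hz)
                    omega
                  exact cAdj_two (by rw [abs_le]; dsimp only; omega)
                    (by dsimp only; rw [h1, show k + ε - k = ε by ring, abs_pm hε])
              · exact hwC a le_rfl hab
    · -- X is a single row segment
      push_neg at hdis
      have hXcomp : X = rowCompOf i X x₀ := by
        ext z
        constructor
        · intro hz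
          have heq : rowCompOf i X z = rowCompOf i X x₀ :=
            hdis _ _ (isRowComp_rowCompOf hz) (isRowComp_rowCompOf hx₀)
          rw [← heq]
          exact mem_rowCompOf hz
        · intro hz
          exact rowComp_subset (isRowComp_rowCompOf hx₀) hz
      obtain ⟨a, b, ha1, hb1, hall, hnota, hnotb, hcompeq⟩ := rowComp_struct (i := i) hX hx₀
      have hXseg : X = rowSeg x₀.2 a b := by
        rw [hXcomp]; exact hcompeq
      by_cases hab : a = b
      · apply contractible_singleton (p0 := (a, x₀.2))
        rw [hXseg]
        ext z
        constructor
        · rintro ⟨h1, h2, h3⟩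
          have : z = (a, x₀.2) := Prod.ext (by omega) h1
          simpa using this
        · intro hz
          have : z = (a, x₀.2) := hz
          rw [this]
          exact ⟨rfl, le_rfl, by omega⟩
      · -- remove the right endpoint
        have hablt : a < b := lt_of_le_of_ne (by omega) hab
        apply step (b, x₀.2) (b - 1, x₀.2)
        · exact hall b (by omega) le_rfl
        · exact hall (b-1) (by omega) (by omega)
        · intro hcon
          have : b - 1 = b := (Prod.ext_iff.mp hcon).1
          omega
        · exact cAdj_horiz (by simp) rfl
        · intro z hz hzne hzadj
          have hzseg : z ∈ rowSeg x₀.2 a b := by rw [← hXseg]; exact hz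
          obtain ⟨h1, h2, h3⟩ := hzseg
          obtain ⟨d1, d2⟩ := cAdj_dinf hzadj
          rw [abs_le] at d1
          have hz1 : z.1 = b - 1 := by
            rcases eq_or_lt_of_le h3 with h | h
            · exfalso; exact hzne (Prod.ext h h1)
            · simp only at d1; omega
          have : z = (b - 1, x₀.2) := Prod.ext hz1 h1
          rw [this]
          exact cAdj_refl i _
        · refine ⟨(b, x₀.2 + 1), ?_, cAdj_vert (by simp) rfl⟩
          rw [hXseg]
          intro hcon
          have : x₀.2 + 1 = x₀.2 := hcon.1
          omega


/-- a nonempty `c_i`-connected digital picture with no hole is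
`i`-contractible. -/
theorem stmt10 (i j : ℕ) (hij : (i = 1 ∧ j = 2) ∨ (i = 2 ∧ j = 1))
    (X : Set Pt) (hX : X.Finite) (hne : X.Nonempty)
    (hconn : Conn i X) (hnohole : NoHole j X) :
    Contractible i (subAdj i X) := by
  exact main_ind i j hij X.ncard X hX le_rfl hne hconn (compl_conn hX hnohole)
end

section
/- If X ⊆ ℤ² is c₂-connected, then H_r(H_c(X)) = H_c(H_r(X)). -/
/-! ### Auxiliary lemmas for stmt13 -/

lemma cadj2_iff (x y : Pt) :
    cAdj 2 x y ↔ (-1 ≤ x.1 - y.1 ∧ x.1 - y.1 ≤ 1 ∧ -1 ≤ x.2 - y.2 ∧ x.2 - y.2 ≤ 1) := by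
  simp only [cAdj, if_neg (by norm_num : (2:ℕ) ≠ 1), abs_le]
  tauto

lemma cadj2_symm {x y : Pt} (h : cAdj 2 x y) : cAdj 2 y x := by
  rw [cadj2_iff] at h ⊢; omega

lemma chainIn_mono {A B : Set Pt} (hAB : A ⊆ B) {x y : Pt} (h : ChainIn 2 A x y) :
    ChainIn 2 B x y := by
  obtain ⟨n, c, h0, hn, hmem, hadj⟩ := h
  exact ⟨n, c, h0, hn, fun k hk => hAB (hmem k hk), hadj⟩

lemma chainIn_trans {A : Set Pt} {x y z : Pt}
    (h1 : ChainIn 2 A x y) (h2 : ChainIn 2 A y z) : ChainIn 2 A x z := by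
  obtain ⟨n, c, hc0, hcn, hcm, hca⟩ := h1
  obtain ⟨m, d, hd0, hdm, hdmem, hda⟩ := h2
  refine ⟨n + m, fun t => if t < n then c t else d (t - n), ?_, ?_, ?_, ?_⟩
  · by_cases h : 0 < n
    · simpa [h] using hc0
    · have hn0 : n = 0 := by omega
      simp only [if_neg (by omega : ¬ (0 < n))]
      rw [Nat.zero_sub, hd0, ← hcn, hn0, hc0]
  · simp only [if_neg (by omega : ¬ (n + m < n))]
    rw [Nat.add_sub_cancel_left, hdm]
  · intro k hk
    by_cases h : k < n
    · simpa [h] using hcm k (by omega)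
    · simpa [h] using hdmem (k - n) (by omega)
  · intro k hk
    by_cases h : k < n
    · by_cases h' : k + 1 < n
      · simpa [h, h'] using hca k h
      · have hk1 : k + 1 = n := by omega
        simp only [if_pos h, if_neg h']
        rw [hk1, Nat.sub_self, hd0, ← hcn, ← hk1]
        exact hca k h
    · simp only [if_neg h, if_neg (by omega : ¬ (k + 1 < n))]
      have : k + 1 - n = (k - n) + 1 := by omega
      rw [this]
      exact hda (k - n) (by omega)

lemma chainIn_symm {A : Set Pt} {x y : Pt} (h : ChainIn 2 A x y) : ChainIn 2 A y x := by
  obtain ⟨n, c, h0, hn, hmem, hadj⟩ := h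
  refine ⟨n, fun t => c (n - t), by simpa using hn, by simpa using h0,
    fun k hk => hmem _ (by omega), fun k hk => ?_⟩
  show cAdj 2 (c (n - k)) (c (n - (k + 1)))
  have hrw : n - k = (n - (k + 1)) + 1 := by omega
  rw [hrw]
  exact cadj2_symm (hadj _ (by omega))

/-- Vertical chain inside a set. -/
lemma vchain {A : Set Pt} (x u v : ℤ) (huv : u ≤ v)
    (hmem : ∀ t : ℤ, u ≤ t → t ≤ v → (x, t) ∈ A) : ChainIn 2 A (x, u) (x, v) := by
  refine ⟨(v - u).toNat, fun t => (x, u + t), by simp, ?_, fun k hk => hmem _ (by omega) (by omega),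
    fun k hk => ?_⟩
  · show (x, u + ((v - u).toNat : ℤ)) = (x, v)
    congr 1
    omega
  · rw [cadj2_iff]
    constructor
    · simp
    push_cast
    omega

/-! ### Explicit descriptions of the hulls -/

def Er (S : Set Pt) : Set Pt := {p | ∃ u v, u ≤ p.1 ∧ p.1 ≤ v ∧ (u, p.2) ∈ S ∧ (v, p.2) ∈ S}

def Ec (S : Set Pt) : Set Pt := {p | ∃ u v, u ≤ p.2 ∧ p.2 ≤ v ∧ (p.1, u) ∈ S ∧ (p.1, v) ∈ S}

lemma rowConvex_Er (S : Set Pt) : RowConvex (Er S) := by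
  rintro a b c k ⟨u₁, v₁, hu₁, hv₁, hm₁, hm₂⟩ ⟨u₂, v₂, hu₂, hv₂, hm₃, hm₄⟩ hab hbc
  exact ⟨u₁, v₂, by omega, by omega, hm₁, hm₄⟩

lemma colConvex_Ec (S : Set Pt) : ColConvex (Ec S) := by
  rintro a b c k ⟨u₁, v₁, hu₁, hv₁, hm₁, hm₂⟩ ⟨u₂, v₂, hu₂, hv₂, hm₃, hm₄⟩ hab hbc
  exact ⟨u₁, v₂, by omega, by omega, hm₁, hm₄⟩

lemma subset_Er (S : Set Pt) : S ⊆ Er S := fun p hp =>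
  ⟨p.1, p.1, le_rfl, le_rfl, by simpa using hp, by simpa using hp⟩

lemma subset_Ec (S : Set Pt) : S ⊆ Ec S := fun p hp =>
  ⟨p.2, p.2, le_rfl, le_rfl, by simpa using hp, by simpa using hp⟩

lemma Er_subset {S T : Set Pt} (hT : RowConvex T) (hST : S ⊆ T) : Er S ⊆ T := by
  rintro p ⟨u, v, hu, hv, hm₁, hm₂⟩
  have := hT u p.1 v p.2 (hST hm₁) (hST hm₂) hu hv
  simpa using this

lemma Ec_subset {S T : Set Pt} (hT : ColConvex T) (hST : S ⊆ T) : Ec S ⊆ T := by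
  rintro p ⟨u, v, hu, hv, hm₁, hm₂⟩
  have := hT u p.2 v p.1 (hST hm₁) (hST hm₂) hu hv
  simpa using this

lemma subset_Hr (S : Set Pt) : S ⊆ Hr S := fun p hp =>
  Set.mem_sInter.2 fun _ hT => hT.2 hp

lemma subset_Hc (S : Set Pt) : S ⊆ Hc S := fun p hp =>
  Set.mem_sInter.2 fun _ hT => hT.2 hp

lemma Hr_min {S T : Set Pt} (h1 : RowConvex T) (h2 : S ⊆ T) : Hr S ⊆ T :=
  Set.sInter_subset_of_mem ⟨h1, h2⟩

lemma Hc_min {S T : Set Pt} (h1 : ColConvex T) (h2 : S ⊆ T) : Hc S ⊆ T :=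
  Set.sInter_subset_of_mem ⟨h1, h2⟩

lemma rowConvex_Hr (S : Set Pt) : RowConvex (Hr S) := by
  intro a b c k h1 h2 hab hbc
  refine Set.mem_sInter.2 fun T hT => hT.1 a b c k ?_ ?_ hab hbc
  · exact Set.mem_sInter.1 h1 T hT
  · exact Set.mem_sInter.1 h2 T hT

lemma colConvex_Hc (S : Set Pt) : ColConvex (Hc S) := by
  intro a b c k h1 h2 hab hbc
  refine Set.mem_sInter.2 fun T hT => hT.1 a b c k ?_ ?_ hab hbc
  · exact Set.mem_sInter.1 h1 T hT
  · exact Set.mem_sInter.1 h2 T hT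

lemma Hr_eq (S : Set Pt) : Hr S = Er S :=
  subset_antisymm (Hr_min (rowConvex_Er S) (subset_Er S))
    (Er_subset (rowConvex_Hr S) (subset_Hr S))

lemma Hc_eq (S : Set Pt) : Hc S = Ec S :=
  subset_antisymm (Hc_min (colConvex_Ec S) (subset_Ec S))
    (Ec_subset (colConvex_Hc S) (subset_Hc S))

/-! ### The crossing lemma -/

lemma crossing (Y : Set Pt) (hY : ColConvex Y) (k b : ℤ) (P Q : Pt)
    (hPk : P.1 ≤ k) (hQk : Q.1 ≤ k) (hPb : P.2 ≤ b) (hQb : b ≤ Q.2)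
    (hchain : ChainIn 2 Y P Q) : ∃ w, w ≤ k ∧ (w, b) ∈ Y := by
  classical
  by_contra hcon
  push_neg at hcon
  obtain ⟨n, c, h0, hn, hmem, hadj⟩ := hchain
  have key : ∀ t, t ≤ n → (c t).1 ≤ k → (c t).2 ≠ b := by
    intro t ht h1 h2
    refine hcon (c t).1 h1 ?_
    have h3 : ((c t).1, (c t).2) ∈ Y := by simpa using hmem t ht
    rwa [h2] at h3
  have hPb' : P.2 < b := by
    rcases lt_or_eq_of_le hPb with h | h
    · exact h
    · exfalso
      have := key 0 (Nat.zero_le n)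
      rw [h0] at this
      exact this hPk h
  have hQb' : b < Q.2 := by
    rcases lt_or_eq_of_le hQb with h | h
    · exact h
    · exfalso
      have := key n le_rfl
      rw [hn] at this
      exact this hQk h.symm
  -- a point with column k and height > b
  have hex : ∃ t, t ≤ n ∧ (c t).1 ≤ k ∧ b < (c t).2 :=
    ⟨n, le_rfl, by rw [hn]; exact hQk, by rw [hn]; exact hQb'⟩
  obtain ⟨t₁, ⟨ht₁n, ht₁k, ht₁b⟩, ht₁min⟩ :
      ∃ t, (t ≤ n ∧ (c t).1 ≤ k ∧ b < (c t).2) ∧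
        ∀ s, s < t → ¬(s ≤ n ∧ (c s).1 ≤ k ∧ b < (c s).2) :=
    ⟨Nat.find hex, Nat.find_spec hex, fun s hs => Nat.find_min hex hs⟩
  have ht₁pos : 0 < t₁ := by
    rcases Nat.eq_zero_or_pos t₁ with h | h
    · exfalso
      rw [h, h0] at ht₁b
      omega
    · exact h
  have hsnot := ht₁min (t₁ - 1) (by omega)
  have hadj₁ := hadj (t₁ - 1) (by omega)
  rw [show t₁ - 1 + 1 = t₁ by omega, cadj2_iff] at hadj₁
  have hs_col : k < (c (t₁ - 1)).1 := by
    by_contra hcol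
    push_neg at hcol
    have hne := key (t₁ - 1) (by omega) hcol
    have hlt : (c (t₁ - 1)).2 < b := by
      rcases lt_trichotomy ((c (t₁ - 1)).2) b with h | h | h
      · exact h
      · exact absurd h hne
      · exact absurd ⟨by omega, hcol, h⟩ hsnot
    omega
  have hhigh_col : (c t₁).1 = k := by omega
  have hhigh : (k, (c t₁).2) ∈ Y := by
    have := hmem t₁ ht₁n
    rw [← hhigh_col]
    simpa using this
  -- a point with column k and height < b
  obtain ⟨t₂, ht₂n, ⟨ht₂k, ht₂b⟩, ht₂max⟩ :
      ∃ t, t ≤ n ∧ ((c t).1 ≤ k ∧ (c t).2 < b) ∧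
        ∀ s, t < s → s ≤ n → ¬((c s).1 ≤ k ∧ (c s).2 < b) := by
    letI : DecidablePred (fun t => (c t).1 ≤ k ∧ (c t).2 < b) := Classical.decPred _
    refine ⟨Nat.findGreatest (fun t => (c t).1 ≤ k ∧ (c t).2 < b) n,
      Nat.findGreatest_le n, ?_, fun s h1 h2 => Nat.findGreatest_is_greatest h1 h2⟩
    refine Nat.findGreatest_spec (P := fun t => (c t).1 ≤ k ∧ (c t).2 < b) (Nat.zero_le n) ?_
    show (c 0).1 ≤ k ∧ (c 0).2 < b
    rw [h0]
    exact ⟨hPk, hPb'⟩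
  have ht₂lt : t₂ < n := by
    rcases lt_or_eq_of_le ht₂n with h | h
    · exact h
    · exfalso
      rw [h, hn] at ht₂b
      omega
  have hnotLo := ht₂max (t₂ + 1) (by omega) (by omega)
  have hadj₂ := hadj t₂ ht₂lt
  rw [cadj2_iff] at hadj₂
  have hnext_col : k < (c (t₂ + 1)).1 := by
    by_contra hcol
    push_neg at hcol
    have hne := key (t₂ + 1) (by omega) hcol
    have hgt : b < (c (t₂ + 1)).2 := by
      rcases lt_trichotomy ((c (t₂ + 1)).2) b with h | h | h
      · exact absurd ⟨hcol, h⟩ hnotLo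
      · exact absurd h hne
      · exact h
    omega
  have hlow_col : (c t₂).1 = k := by omega
  have hlow : (k, (c t₂).2) ∈ Y := by
    have := hmem t₂ ht₂n
    rw [← hlow_col]
    simpa using this
  exact hcon k le_rfl (hY (c t₂).2 b (c t₁).2 k hlow hhigh (by omega) (by omega))

lemma crossing' (Y : Set Pt) (hY : ColConvex Y) (k b : ℤ) (P Q : Pt)
    (hPk : k ≤ P.1) (hQk : k ≤ Q.1) (hPb : P.2 ≤ b) (hQb : b ≤ Q.2)
    (hchain : ChainIn 2 Y P Q) : ∃ w, k ≤ w ∧ (w, b) ∈ Y := by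
  set Y' : Set Pt := {p | (-p.1, p.2) ∈ Y} with hY'def
  have hY'c : ColConvex Y' := by
    intro a b' c' k' h1 h2 hab hbc
    exact hY a b' c' (-k') h1 h2 hab hbc
  have hchain' : ChainIn 2 Y' (-P.1, P.2) (-Q.1, Q.2) := by
    obtain ⟨n, c, h0, hn, hmem, hadj⟩ := hchain
    refine ⟨n, fun t => (-(c t).1, (c t).2), by simp only [h0], by simp only [hn],
      fun t ht => ?_, fun t ht => ?_⟩
    · show (-(-(c t).1), (c t).2) ∈ Y
      simpa using hmem t ht
    · have := hadj t ht
      rw [cadj2_iff] at this ⊢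
      simp only
      omega
  obtain ⟨w, hw, hwb⟩ := crossing Y' hY'c (-k) b (-P.1, P.2) (-Q.1, Q.2)
    (by simpa using hPk) (by simpa using hQk) hPb hQb hchain'
  refine ⟨-w, by omega, ?_⟩
  simpa [hY'def] using hwb

lemma colConvex_Er {Y : Set Pt} (hY : ColConvex Y) (hc : Conn 2 Y) : ColConvex (Er Y) := by
  rintro a b c k ⟨u₁, v₁, hu₁, hv₁, hm₁, hm₂⟩ ⟨u₂, v₂, hu₂, hv₂, hm₃, hm₄⟩ hab hbc
  obtain ⟨w₁, hw₁, hwb₁⟩ := crossing Y hY k b (u₁, a) (u₂, c) hu₁ hu₂ hab hbc (hc _ hm₁ _ hm₃)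
  obtain ⟨w₂, hw₂, hwb₂⟩ := crossing' Y hY k b (v₁, a) (v₂, c) hv₁ hv₂ hab hbc (hc _ hm₂ _ hm₄)
  exact ⟨w₁, w₂, hw₁, hw₂, hwb₁, hwb₂⟩

/-! ### Transposition -/

def Tr (S : Set Pt) : Set Pt := {p | (p.2, p.1) ∈ S}

lemma colConvex_Tr {S : Set Pt} (h : RowConvex S) : ColConvex (Tr S) :=
  fun a b c k h1 h2 hab hbc => h a b c k h1 h2 hab hbc

lemma rowConvex_Tr {S : Set Pt} (h : ColConvex S) : RowConvex (Tr S) :=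
  fun a b c k h1 h2 hab hbc => h a b c k h1 h2 hab hbc

lemma conn_Tr {S : Set Pt} (h : Conn 2 S) : Conn 2 (Tr S) := by
  intro p hp q hq
  obtain ⟨n, c, h0, hn, hmem, hadj⟩ := h (p.2, p.1) hp (q.2, q.1) hq
  refine ⟨n, fun t => ((c t).2, (c t).1), ?_, ?_, fun t ht => ?_, fun t ht => ?_⟩
  · simp [h0]
  · simp [hn]
  · show ((c t).1, (c t).2) ∈ S
    simpa using hmem t ht
  · have := hadj t ht
    rw [cadj2_iff] at this ⊢
    simp only
    omega

lemma Ec_eq_Tr (S : Set Pt) : Ec S = Tr (Er (Tr S)) := by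
  ext p
  simp only [Ec, Er, Tr, Set.mem_setOf_eq]

lemma Er_eq_Tr (S : Set Pt) : Er S = Tr (Ec (Tr S)) := by
  ext p
  simp only [Ec, Er, Tr, Set.mem_setOf_eq]

lemma rowConvex_Ec {Y : Set Pt} (hY : RowConvex Y) (hc : Conn 2 Y) : RowConvex (Ec Y) := by
  rw [Ec_eq_Tr]
  exact rowConvex_Tr (colConvex_Er (colConvex_Tr hY) (conn_Tr hc))

/-! ### Connectivity of hulls -/

lemma conn_Ec {X : Set Pt} (hconn : Conn 2 X) : Conn 2 (Ec X) := by
  intro p hp q hq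
  obtain ⟨u₁, v₁, hu₁, hv₁, hm₁, hm₂⟩ := hp
  obtain ⟨u₂, v₂, hu₂, hv₂, hm₃, hm₄⟩ := hq
  have hvert : ∀ (x u v : ℤ), (x, u) ∈ X → (x, v) ∈ X → ∀ t : ℤ, u ≤ t → t ≤ v → (x, t) ∈ Ec X :=
    fun x u v hu hv t h1 h2 => ⟨u, v, h1, h2, hu, hv⟩
  have c1 : ChainIn 2 (Ec X) (p.1, u₁) (p.1, p.2) :=
    vchain p.1 u₁ p.2 hu₁ (fun t h1 h2 => hvert p.1 u₁ v₁ hm₁ hm₂ t h1 (by omega))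
  have c3 : ChainIn 2 (Ec X) (q.1, u₂) (q.1, q.2) :=
    vchain q.1 u₂ q.2 hu₂ (fun t h1 h2 => hvert q.1 u₂ v₂ hm₃ hm₄ t h1 (by omega))
  have c2 : ChainIn 2 (Ec X) (p.1, u₁) (q.1, u₂) :=
    chainIn_mono (subset_Ec X) (hconn _ hm₁ _ hm₃)
  have := chainIn_trans (chainIn_trans (chainIn_symm c1) c2) c3
  simpa using this

lemma conn_Er {X : Set Pt} (hconn : Conn 2 X) : Conn 2 (Er X) := by
  rw [Er_eq_Tr]
  exact conn_Tr (conn_Ec (conn_Tr hconn))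
/-- if `X ⊆ ℤ²` is `c₂`-connected, then `H_r(H_c(X)) = H_c(H_r(X))`. -/
theorem stmt13 (X : Set Pt) (hconn : Conn 2 X) :
    Hr (Hc X) = Hc (Hr X) := by
  have hcc : ColConvex (Hc X) := colConvex_Hc X
  have hrc : RowConvex (Hr X) := rowConvex_Hr X
  have hce : Conn 2 (Hc X) := by rw [Hc_eq]; exact conn_Ec hconn
  have hre : Conn 2 (Hr X) := by rw [Hr_eq]; exact conn_Er hconn
  apply subset_antisymm
  · refine Hr_min ?_ ?_
    · rw [Hc_eq]
      exact rowConvex_Ec hrc hre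
    · exact Hc_min (colConvex_Hc _) ((subset_Hr X).trans (subset_Hc _))
  · refine Hc_min ?_ ?_
    · rw [Hr_eq]
      exact colConvex_Er hcc hce
    · exact Hr_min (rowConvex_Hr _) ((subset_Hc X).trans (subset_Hr _))
end
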